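/- arXiv:1512.00609 — 8 statements merged into one kernel-verified Lean document; each statement's English description precedes it below -/
import Mathlib

section
/- The map ℝⁿ → ℝ^{n+2} given by (x₁,…,xₙ) ↦ (1, x₁, …, xₙ, x₁² + ⋯ + xₙ²) is 3-regular: the images of any 3 distinct points of ℝⁿ are linearly independent. -/
/-- The map `(x₁,…,xₙ) ↦ (1, x₁, …, xₙ, Σ xᵢ²)` from `ℝⁿ` to `ℝ^{n+2}` is 3-regular. -/
theorem stmt2 (n : ℕ) :
    ∀ P : Fin 3 → (Fin n → ℝ), Function.Injective P →
      LinearIndependent ℝ (fun i : Fin 3 =>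
        (Fin.cons 1 (Fin.snoc (P i) (∑ j, P i j ^ 2)) : Fin (n + 2) → ℝ)) := by
  intro P hP
  rw [Fintype.linearIndependent_iff]
  intro c hc
  have hc' : ∀ k : Fin (n + 2),
      c 0 * (Fin.cons 1 (Fin.snoc (P 0) (∑ j, P 0 j ^ 2)) : Fin (n + 2) → ℝ) k +
      c 1 * (Fin.cons 1 (Fin.snoc (P 1) (∑ j, P 1 j ^ 2)) : Fin (n + 2) → ℝ) k +
      c 2 * (Fin.cons 1 (Fin.snoc (P 2) (∑ j, P 2 j ^ 2)) : Fin (n + 2) → ℝ) k = 0 := by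
    intro k
    have := congrFun hc k
    simpa [Fin.sum_univ_three, add_assoc] using this
  have h0 : c 0 + c 1 + c 2 = 0 := by
    have := hc' 0
    simpa using this
  have hmid : ∀ j : Fin n, c 0 * P 0 j + c 1 * P 1 j + c 2 * P 2 j = 0 := by
    intro j
    have := hc' (Fin.succ (Fin.castSucc j))
    simpa [Fin.cons_succ, Fin.snoc_castSucc] using this
  have hlast : c 0 * (∑ j, P 0 j ^ 2) + c 1 * (∑ j, P 1 j ^ 2) +
      c 2 * (∑ j, P 2 j ^ 2) = 0 := by
    have := hc' (Fin.succ (Fin.last n))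
    simp only [Fin.cons_succ, Fin.snoc_last] at this
    exact this
  -- key quadratic identity: ∑ᵢ cᵢ ‖Pᵢ - v‖² = 0 for every v
  have hQ : ∀ v : Fin n → ℝ,
      c 0 * (∑ j, (P 0 j - v j) ^ 2) + c 1 * (∑ j, (P 1 j - v j) ^ 2) +
      c 2 * (∑ j, (P 2 j - v j) ^ 2) = 0 := by
    intro v
    have e : ∀ i : Fin 3, ∑ j, (P i j - v j) ^ 2 =
        (∑ j, P i j ^ 2) - (∑ j, v j * (2 * P i j)) + (∑ j, v j ^ 2) := by
      intro i
      have h : ∀ j ∈ Finset.univ, (P i j - v j) ^ 2 =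
          P i j ^ 2 - v j * (2 * P i j) + v j ^ 2 := fun j _ => by ring
      rw [Finset.sum_congr rfl h, Finset.sum_add_distrib, Finset.sum_sub_distrib]
    have hT : c 0 * (∑ j, v j * (2 * P 0 j)) + c 1 * (∑ j, v j * (2 * P 1 j)) +
        c 2 * (∑ j, v j * (2 * P 2 j)) = 0 := by
      rw [Finset.mul_sum, Finset.mul_sum, Finset.mul_sum, ← Finset.sum_add_distrib,
        ← Finset.sum_add_distrib]
      apply Finset.sum_eq_zero
      intro j _
      linear_combination 2 * v j * hmid j
    rw [e 0, e 1, e 2]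
    linear_combination hlast - hT + (∑ j, v j ^ 2) * h0
  have hsym : ∀ x y : Fin n → ℝ, ∑ j, (x j - y j) ^ 2 = ∑ j, (y j - x j) ^ 2 := by
    intro x y
    exact Finset.sum_congr rfl fun j _ => by ring
  set A := ∑ j, (P 0 j - P 1 j) ^ 2 with hAdef
  set B := ∑ j, (P 0 j - P 2 j) ^ 2 with hBdef
  set C := ∑ j, (P 1 j - P 2 j) ^ 2 with hCdef
  have hpos : ∀ a b : Fin 3, a ≠ b → 0 < ∑ j, (P a j - P b j) ^ 2 := by
    intro a b hab
    have hne : P a ≠ P b := fun h => hab (hP h)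
    obtain ⟨j, hj⟩ := Function.ne_iff.mp hne
    refine Finset.sum_pos' (fun k _ => by positivity) ⟨j, Finset.mem_univ j, ?_⟩
    have : P a j - P b j ≠ 0 := sub_ne_zero.mpr hj
    positivity
  have hA : 0 < A := hpos 0 1 (by decide)
  have hB : 0 < B := hpos 0 2 (by decide)
  have hC : 0 < C := hpos 1 2 (by decide)
  have e1 : c 1 * A + c 2 * B = 0 := by
    have := hQ (P 0)
    rw [hsym (P 1) (P 0), hsym (P 2) (P 0)] at this
    simpa using this
  have e2 : c 0 * A + c 2 * C = 0 := by
    have := hQ (P 1)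
    rw [hsym (P 2) (P 1)] at this
    simpa using this
  have e3 : c 0 * B + c 1 * C = 0 := by
    have := hQ (P 2)
    simpa using this
  have key : c 2 * (2 * (B * C)) = 0 := by
    linear_combination B * e2 + C * e1 - A * e3
  have hc2 : c 2 = 0 := by
    have hBC : (0:ℝ) < 2 * (B * C) := by positivity
    exact (mul_eq_zero.mp key).resolve_right (ne_of_gt hBC)
  have hc1 : c 1 = 0 := by
    have : c 1 * A = 0 := by linear_combination e1 - B * hc2
    exact (mul_eq_zero.mp this).resolve_right (ne_of_gt hA)
  have hc0 : c 0 = 0 := by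
    have : c 0 * A = 0 := by linear_combination e2 - C * hc2
    exact (mul_eq_zero.mp this).resolve_right (ne_of_gt hA)
  intro i
  fin_cases i
  · exact hc0
  · exact hc1
  · exact hc2
end

section
/- For any field F and any r ≥ k−1, the affine Veronese map v_r : Fⁿ → F^{C(n+r,n)} sending a point x to the vector of all monomials in x₁,…,xₙ of degree at most r (including the constant monomial 1) is k-regular: the images of any k distinct points are linearly independent. -/
open MvPolynomial

/-- For any field `F` and `r ≥ k - 1`, the affine Veronese map of degree `r`, sending `x`
to the vector of values of all monomials of degree at most `r`, is `k`-regular. -/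
theorem stmt4 (F : Type*) [Field F] (n k r : ℕ) (hr : k - 1 ≤ r) :
    ∀ P : Fin k → (Fin n → F), Function.Injective P →
      LinearIndependent F (fun i : Fin k =>
        fun a : {a : Fin n → ℕ // ∑ j, a j ≤ r} => ∏ j, P i j ^ a.1 j) := by
  classical
  intro P hP
  rw [Fintype.linearIndependent_iff]
  intro c hc i0
  have hsep : ∀ i : {i : Fin k // i ≠ i0}, ∃ j, P i.1 j ≠ P i0 j := by
    rintro ⟨i, hi⟩
    by_contra h
    push_neg at h
    exact hi (hP (funext h))
  choose j hj using hsep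
  set q : MvPolynomial (Fin n) F :=
    ∏ i : {i : Fin k // i ≠ i0}, (X (j i) - C (P i.1 (j i))) with hq
  have hdeg : q.totalDegree ≤ r := by
    refine le_trans (totalDegree_finset_prod _ _) ?_
    have h1 : ∑ i : {i : Fin k // i ≠ i0}, (X (j i) - C (P i.1 (j i))).totalDegree
        ≤ ∑ _i : {i : Fin k // i ≠ i0}, 1 :=
      Finset.sum_le_sum fun i _ =>
        le_trans (totalDegree_sub _ _) (by simp [totalDegree_X])
    have hcard : Fintype.card {i : Fin k // i ≠ i0} = k - 1 := by
      simp [Fintype.card_subtype_compl, Fintype.card_subtype_eq]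
    refine le_trans h1 ?_
    simp only [Finset.sum_const, smul_eq_mul, mul_one, Finset.card_univ, hcard]
    exact hr
  have key : ∀ a : Fin n →₀ ℕ, a ∈ q.support →
      ∑ i, c i * ∏ j', P i j' ^ a j' = 0 := by
    intro a ha
    have hsum : ∑ j', a j' ≤ r := by
      have h1 : (a.sum fun _ e => e) ≤ q.totalDegree := le_totalDegree ha
      have h2 : (a.sum fun _ e => e) = ∑ j', a j' :=
        Finsupp.sum_fintype _ _ (fun _ => rfl)
      omega
    have := congrFun hc ⟨(fun j' => a j'), hsum⟩
    simpa [Finset.sum_apply] using this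
  have hzero : ∑ i, c i * MvPolynomial.eval (P i) q = 0 := by
    simp_rw [eval_eq', Finset.mul_sum]
    rw [Finset.sum_comm]
    refine Finset.sum_eq_zero fun a ha => ?_
    have := key a ha
    calc ∑ i, c i * (q.coeff a * ∏ j', P i j' ^ a j')
        = q.coeff a * ∑ i, c i * ∏ j', P i j' ^ a j' := by
          rw [Finset.mul_sum]; congr 1; funext i; ring
      _ = 0 := by rw [this, mul_zero]
  have heval0 : ∀ i : Fin k, i ≠ i0 → MvPolynomial.eval (P i) q = 0 := by
    intro i hi
    rw [hq, map_prod]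
    refine Finset.prod_eq_zero (Finset.mem_univ (⟨i, hi⟩ : {i : Fin k // i ≠ i0})) ?_
    simp
  have hevalne : MvPolynomial.eval (P i0) q ≠ 0 := by
    rw [hq, map_prod]
    refine Finset.prod_ne_zero_iff.2 fun i _ => ?_
    simp only [map_sub, eval_X, eval_C]
    exact sub_ne_zero_of_ne (hj i).symm
  have hsingle : ∑ i, c i * MvPolynomial.eval (P i) q
      = c i0 * MvPolynomial.eval (P i0) q := by
    refine Finset.sum_eq_single i0 ?_ ?_
    · intro i _ hi
      rw [heval0 i hi, mul_zero]
    · intro h; exact absurd (Finset.mem_univ i0) h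
  have : c i0 * MvPolynomial.eval (P i0) q = 0 := by rw [← hsingle]; exact hzero
  exact (mul_eq_zero.1 this).resolve_right hevalne
end

section
/- Let f = (f₁,…,f_N) : ℂⁿ → ℂᴺ be a polynomial map, and suppose there exists a positive integer weighting w of the variables x₁,…,xₙ such that each fᵢ is weighted-homogeneous (fᵢ(λ^{w(x₁)}x₁,…,λ^{w(xₙ)}xₙ) = λ^{dᵢ} fᵢ(x) for some dᵢ and all λ). If f is k-regular on some open neighborhood of 0 ∈ ℂⁿ, then f is k-regular on all of ℂⁿ. -/
open MvPolynomial

/-- A polynomial map `ℂⁿ → ℂᴺ` whose components are homogeneous with respect to some positive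
weighting of the variables, and which is `k`-regular on a neighborhood of `0`, is globally
`k`-regular. -/
theorem stmt8 (n N k : ℕ) (f : Fin N → MvPolynomial (Fin n) ℂ)
    (w : Fin n → ℕ) (hw : ∀ j, 0 < w j)
    (hhom : ∀ i, ∃ d : ℕ, ∀ (lam : ℂ) (x : Fin n → ℂ),
      eval (fun j => lam ^ w j * x j) (f i) = lam ^ d * eval x (f i))
    (hloc : ∃ U ∈ nhds (0 : Fin n → ℂ), ∀ P : Fin k → (Fin n → ℂ),
      Function.Injective P → (∀ i, P i ∈ U) →
      LinearIndependent ℂ (fun i : Fin k => fun j : Fin N => eval (P i) (f j))) :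
    ∀ P : Fin k → (Fin n → ℂ), Function.Injective P →
      LinearIndependent ℂ (fun i : Fin k => fun j : Fin N => eval (P i) (f j)) := by
  obtain ⟨U, hU, hreg⟩ := hloc
  choose d hd using hhom
  intro P hP
  set g : Fin k → ℂ → (Fin n → ℂ) := fun i lam j => lam ^ w j * P i j with hg
  have hg0 : ∀ i, g i 0 = 0 := by
    intro i; funext j; simp [g, zero_pow (hw j).ne']
  have hgc : ∀ i, ContinuousAt (g i) 0 := fun i =>
    (continuous_pi fun j => (continuous_pow _).mul continuous_const).continuousAt
  have hmem : (⋂ i, (g i) ⁻¹' U) ∈ nhds (0 : ℂ) := by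
    refine (Filter.iInter_mem).2 fun i => (hgc i).preimage_mem_nhds ?_
    rw [hg0 i]; exact hU
  obtain ⟨lam, hlam0, hlamU⟩ := Filter.nonempty_of_mem
    (Filter.inter_mem self_mem_nhdsWithin (mem_nhdsWithin_of_mem_nhds hmem) :
      _ ∈ nhdsWithin (0 : ℂ) {(0 : ℂ)}ᶜ)
  simp only [Set.mem_compl_iff, Set.mem_singleton_iff] at hlam0
  rw [Set.mem_iInter] at hlamU
  have hTinj : Function.Injective (fun i => g i lam) := by
    intro a b hab
    apply hP
    funext j
    have h := congrFun hab j
    simp only [g] at h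
    exact mul_left_cancel₀ (pow_ne_zero _ hlam0) h
  have hli := hreg (fun i => g i lam) hTinj (fun i => hlamU i)
  set L : (Fin N → ℂ) →ₗ[ℂ] (Fin N → ℂ) :=
    LinearMap.pi (fun j => (lam ^ d j) • (LinearMap.proj j)) with hL
  have hcomp : (fun i : Fin k => fun j : Fin N => eval (g i lam) (f j))
      = L ∘ (fun i : Fin k => fun j : Fin N => eval (P i) (f j)) := by
    funext i j
    simp [L, g, hd j lam (P i), LinearMap.pi_apply, smul_eq_mul]
  rw [hcomp] at hli
  exact hli.of_comp L
end

section
/- The map ℂ³ → ℂ¹¹ given by (s,t,u) ↦ (1, s, t, u, st, su, tu, s², s³ − t², t³ − u², u³) is 4-regular: the images of any 4 distinct points of ℂ³ are linearly independent in ℂ¹¹. -/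
/-- The map `(s,t,u) ↦ (1, s, t, u, st, su, tu, s², s³−t², t³−u², u³)` from `ℂ³` to `ℂ¹¹`. -/
noncomputable def F4 : ℂ × ℂ × ℂ → Fin 11 → ℂ := fun p =>
  ![1, p.1, p.2.1, p.2.2, p.1 * p.2.1, p.1 * p.2.2, p.2.1 * p.2.2, p.1 ^ 2,
    p.1 ^ 3 - p.2.1 ^ 2, p.2.1 ^ 3 - p.2.2 ^ 2, p.2.2 ^ 3]

/-- Two-point case. -/
private lemma L2 (s0 t0 u0 s1 t1 u1 c0 c1 : ℂ)
    (hd : ¬(s0 = s1 ∧ t0 = t1 ∧ u0 = u1))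
    (e1 : c0 + c1 = 0) (e2 : c0*s0 + c1*s1 = 0)
    (e3 : c0*t0 + c1*t1 = 0) (e4 : c0*u0 + c1*u1 = 0) : c0 = 0 := by
  by_contra h0
  apply hd
  have hs : c0*(s0 - s1) = 0 := by linear_combination e2 - s1*e1
  have ht : c0*(t0 - t1) = 0 := by linear_combination e3 - t1*e1
  have hu : c0*(u0 - u1) = 0 := by linear_combination e4 - u1*e1
  exact ⟨sub_eq_zero.mp ((mul_eq_zero.mp hs).resolve_left h0),
         sub_eq_zero.mp ((mul_eq_zero.mp ht).resolve_left h0),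
         sub_eq_zero.mp ((mul_eq_zero.mp hu).resolve_left h0)⟩

/-- Moment lemma for collinear configurations. -/
private lemma Mlem (vs vt vu S T U M2 M3 : ℂ)
    (hv : ¬(vs = 0 ∧ vt = 0 ∧ vu = 0))
    (A1 : vs^2*M2 = 0)
    (A3 : vs^3*M3 + 3*S*vs^2*M2 - vt^2*M2 = 0)
    (A4 : vt^3*M3 + 3*T*vt^2*M2 - vu^2*M2 = 0)
    (A5 : vu^3*M3 + 3*U*vu^2*M2 = 0) : M2 = 0 ∧ M3 = 0 := by
  by_cases hvs : vs = 0
  · by_cases hvt : vt = 0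
    · have hvu : vu ≠ 0 := fun h => hv ⟨hvs, hvt, h⟩
      have h2 : vu^2*M2 = 0 := by
        linear_combination -A4 + (vt^2*M3 + 3*T*vt*M2)*hvt
      have hM2 : M2 = 0 := (mul_eq_zero.mp h2).resolve_left (pow_ne_zero 2 hvu)
      have h3 : vu^3*M3 = 0 := by linear_combination A5 - 3*U*vu^2*hM2
      exact ⟨hM2, (mul_eq_zero.mp h3).resolve_left (pow_ne_zero 3 hvu)⟩
    · have h2 : vt^2*M2 = 0 := by
        linear_combination -A3 + (vs^2*M3 + 3*S*vs*M2)*hvs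
      have hM2 : M2 = 0 := (mul_eq_zero.mp h2).resolve_left (pow_ne_zero 2 hvt)
      have h3 : vt^3*M3 = 0 := by linear_combination A4 + (vu^2 - 3*T*vt^2)*hM2
      exact ⟨hM2, (mul_eq_zero.mp h3).resolve_left (pow_ne_zero 3 hvt)⟩
  · have hM2 : M2 = 0 := (mul_eq_zero.mp A1).resolve_left (pow_ne_zero 2 hvs)
    have h3 : vs^3*M3 = 0 := by linear_combination A3 + (vt^2 - 3*S*vs^2)*hM2
    exact ⟨hM2, (mul_eq_zero.mp h3).resolve_left (pow_ne_zero 3 hvs)⟩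

/-- Three-point case. -/
private lemma L3 (s0 t0 u0 s1 t1 u1 s2 t2 u2 c0 c1 c2 : ℂ)
    (hd01 : ¬(s0 = s1 ∧ t0 = t1 ∧ u0 = u1))
    (hd02 : ¬(s0 = s2 ∧ t0 = t2 ∧ u0 = u2))
    (hd12 : ¬(s1 = s2 ∧ t1 = t2 ∧ u1 = u2))
    (e1 : c0 + c1 + c2 = 0)
    (e2 : c0*s0 + c1*s1 + c2*s2 = 0)
    (e3 : c0*t0 + c1*t1 + c2*t2 = 0)
    (e4 : c0*u0 + c1*u1 + c2*u2 = 0)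
    (e8 : c0*s0^2 + c1*s1^2 + c2*s2^2 = 0)
    (e9 : c0*(s0^3 - t0^2) + c1*(s1^3 - t1^2) + c2*(s2^3 - t2^2) = 0)
    (e10 : c0*(t0^3 - u0^2) + c1*(t1^3 - u1^2) + c2*(t2^3 - u2^2) = 0)
    (e11 : c0*u0^3 + c1*u1^3 + c2*u2^3 = 0) : c0 = 0 := by
  by_cases h0 : c0 = 0
  · exact h0
  by_cases h1 : c1 = 0
  · exact L2 s0 t0 u0 s2 t2 u2 c0 c2 hd02
      (by linear_combination e1 - h1) (by linear_combination e2 - s1*h1)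
      (by linear_combination e3 - t1*h1) (by linear_combination e4 - u1*h1)
  by_cases h2 : c2 = 0
  · exact L2 s0 t0 u0 s1 t1 u1 c0 c1 hd01
      (by linear_combination e1 - h2) (by linear_combination e2 - s2*h2)
      (by linear_combination e3 - t2*h2) (by linear_combination e4 - u2*h2)
  exfalso
  have hrs : c0*(s0 - s2) + c1*(s1 - s2) = 0 := by linear_combination e2 - s2*e1
  have hrt : c0*(t0 - t2) + c1*(t1 - t2) = 0 := by linear_combination e3 - t2*e1
  have hru : c0*(u0 - u2) + c1*(u1 - u2) = 0 := by linear_combination e4 - u2*e1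
  obtain ⟨k, hM1⟩ : ∃ k : ℂ, c0*k + c1 = 0 := ⟨-c1/c0, by field_simp; try ring⟩
  have hs0 : s0 = s2 + k*(s1 - s2) := by
    have h : c0*(s0 - (s2 + k*(s1-s2))) = 0 := by
      linear_combination hrs - (s1-s2)*hM1
    have := (mul_eq_zero.mp h).resolve_left h0
    linear_combination this
  have ht0 : t0 = t2 + k*(t1 - t2) := by
    have h : c0*(t0 - (t2 + k*(t1-t2))) = 0 := by
      linear_combination hrt - (t1-t2)*hM1
    have := (mul_eq_zero.mp h).resolve_left h0
    linear_combination this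
  have hu0 : u0 = u2 + k*(u1 - u2) := by
    have h : c0*(u0 - (u2 + k*(u1-u2))) = 0 := by
      linear_combination hru - (u1-u2)*hM1
    have := (mul_eq_zero.mp h).resolve_left h0
    linear_combination this
  subst hs0 ht0 hu0
  -- pairwise distinct parameters
  have hk0 : k ≠ 0 := fun h => hd02 ⟨by rw [h]; ring, by rw [h]; ring, by rw [h]; ring⟩
  have hk1 : k ≠ 1 := fun h => hd01 ⟨by rw [h]; ring, by rw [h]; ring, by rw [h]; ring⟩
  have hv : ¬(s1 - s2 = 0 ∧ t1 - t2 = 0 ∧ u1 - u2 = 0) := by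
    rintro ⟨a, b, c⟩
    exact hd12 ⟨sub_eq_zero.mp a, sub_eq_zero.mp b, sub_eq_zero.mp c⟩
  have A1 : (s1-s2)^2*(c0*k^2+c1) = 0 := by
    linear_combination e8 - s2^2*e1 - 2*s2*(s1-s2)*hM1
  have A3 : (s1-s2)^3*(c0*k^3+c1) + 3*s2*(s1-s2)^2*(c0*k^2+c1) - (t1-t2)^2*(c0*k^2+c1) = 0 := by
    linear_combination e9 - (s2^3 - t2^2)*e1 - (3*s2^2*(s1-s2) - 2*t2*(t1-t2))*hM1
  have A4 : (t1-t2)^3*(c0*k^3+c1) + 3*t2*(t1-t2)^2*(c0*k^2+c1) - (u1-u2)^2*(c0*k^2+c1) = 0 := by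
    linear_combination e10 - (t2^3 - u2^2)*e1 - (3*t2^2*(t1-t2) - 2*u2*(u1-u2))*hM1
  have A5 : (u1-u2)^3*(c0*k^3+c1) + 3*u2*(u1-u2)^2*(c0*k^2+c1) = 0 := by
    linear_combination e11 - u2^3*e1 - 3*u2^2*(u1-u2)*hM1
  obtain ⟨hM2, -⟩ := Mlem (s1-s2) (t1-t2) (u1-u2) s2 t2 u2 _ _ hv A1 A3 A4 A5
  have hfin : c0*(k*(k-1)) = 0 := by linear_combination hM2 - hM1
  rcases mul_eq_zero.mp hfin with h | h
  · exact h0 h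
  rcases mul_eq_zero.mp h with h | h
  · exact hk0 h
  · exact hk1 (by linear_combination h)

/-- Four-point case. -/
private lemma L4 (s0 t0 u0 s1 t1 u1 s2 t2 u2 s3 t3 u3 c0 c1 c2 c3 : ℂ)
    (hd01 : ¬(s0 = s1 ∧ t0 = t1 ∧ u0 = u1))
    (hd02 : ¬(s0 = s2 ∧ t0 = t2 ∧ u0 = u2))
    (hd03 : ¬(s0 = s3 ∧ t0 = t3 ∧ u0 = u3))
    (hd12 : ¬(s1 = s2 ∧ t1 = t2 ∧ u1 = u2))
    (hd13 : ¬(s1 = s3 ∧ t1 = t3 ∧ u1 = u3))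
    (hd23 : ¬(s2 = s3 ∧ t2 = t3 ∧ u2 = u3))
    (e1 : c0 + c1 + c2 + c3 = 0)
    (e2 : c0*s0 + c1*s1 + c2*s2 + c3*s3 = 0)
    (e3 : c0*t0 + c1*t1 + c2*t2 + c3*t3 = 0)
    (e4 : c0*u0 + c1*u1 + c2*u2 + c3*u3 = 0)
    (e5 : c0*(s0*t0) + c1*(s1*t1) + c2*(s2*t2) + c3*(s3*t3) = 0)
    (e6 : c0*(s0*u0) + c1*(s1*u1) + c2*(s2*u2) + c3*(s3*u3) = 0)
    (e7 : c0*(t0*u0) + c1*(t1*u1) + c2*(t2*u2) + c3*(t3*u3) = 0)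
    (e8 : c0*s0^2 + c1*s1^2 + c2*s2^2 + c3*s3^2 = 0)
    (e9 : c0*(s0^3 - t0^2) + c1*(s1^3 - t1^2) + c2*(s2^3 - t2^2) + c3*(s3^3 - t3^2) = 0)
    (e10 : c0*(t0^3 - u0^2) + c1*(t1^3 - u1^2) + c2*(t2^3 - u2^2) + c3*(t3^3 - u3^2) = 0)
    (e11 : c0*u0^3 + c1*u1^3 + c2*u2^3 + c3*u3^3 = 0) : c0 = 0 := by
  by_cases h0 : c0 = 0
  · exact h0
  by_cases h1 : c1 = 0
  · exact L3 s0 t0 u0 s2 t2 u2 s3 t3 u3 c0 c2 c3 hd02 hd03 hd23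
      (by linear_combination e1 - h1) (by linear_combination e2 - s1*h1)
      (by linear_combination e3 - t1*h1) (by linear_combination e4 - u1*h1)
      (by linear_combination e8 - s1^2*h1) (by linear_combination e9 - (s1^3-t1^2)*h1)
      (by linear_combination e10 - (t1^3-u1^2)*h1) (by linear_combination e11 - u1^3*h1)
  by_cases h2 : c2 = 0
  · exact L3 s0 t0 u0 s1 t1 u1 s3 t3 u3 c0 c1 c3 hd01 hd03 hd13
      (by linear_combination e1 - h2) (by linear_combination e2 - s2*h2)
      (by linear_combination e3 - t2*h2) (by linear_combination e4 - u2*h2)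
      (by linear_combination e8 - s2^2*h2) (by linear_combination e9 - (s2^3-t2^2)*h2)
      (by linear_combination e10 - (t2^3-u2^2)*h2) (by linear_combination e11 - u2^3*h2)
  by_cases h3 : c3 = 0
  · exact L3 s0 t0 u0 s1 t1 u1 s2 t2 u2 c0 c1 c2 hd01 hd02 hd12
      (by linear_combination e1 - h3) (by linear_combination e2 - s3*h3)
      (by linear_combination e3 - t3*h3) (by linear_combination e4 - u3*h3)
      (by linear_combination e8 - s3^2*h3) (by linear_combination e9 - (s3^3-t3^2)*h3)
      (by linear_combination e10 - (t3^3-u3^2)*h3) (by linear_combination e11 - u3^3*h3)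
  exfalso
  have hrs : c0*(s0 - s3) + c1*(s1 - s3) + c2*(s2 - s3) = 0 := by linear_combination e2 - s3*e1
  have hrt : c0*(t0 - t3) + c1*(t1 - t3) + c2*(t2 - t3) = 0 := by linear_combination e3 - t3*e1
  have hru : c0*(u0 - u3) + c1*(u1 - u3) + c2*(u2 - u3) = 0 := by linear_combination e4 - u3*e1
  by_cases hx : ∀ x y : ℂ, x*(s1-s3) + y*(s2-s3) = 0 → x*(t1-t3) + y*(t2-t3) = 0 →
      x*(u1-u3) + y*(u2-u3) = 0 → x = 0 ∧ y = 0
  · -- plane case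
    have E5' : c1*(c0+c1)*(s1-s3)^2 + 2*(c1*c2)*((s1-s3)*(s2-s3)) + c2*(c0+c2)*(s2-s3)^2
        = 0 := by
      linear_combination c0*e8 - 2*c0*s3*e2 + c0*s3^2*e1
        - (c0*(s0-s3) - c1*(s1-s3) - c2*(s2-s3))*hrs
    have E6' : c1*(c0+c1)*((s1-s3)*(t1-t3))
        + (c1*c2)*((s1-s3)*(t2-t3) + (s2-s3)*(t1-t3))
        + c2*(c0+c2)*((s2-s3)*(t2-t3)) = 0 := by
      linear_combination c0*e5 - c0*t3*e2 - c0*s3*e3 + c0*s3*t3*e1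
        - c0*(t0-t3)*hrs + (c1*(s1-s3) + c2*(s2-s3))*hrt
    have E7' : c1*(c0+c1)*((s1-s3)*(u1-u3))
        + (c1*c2)*((s1-s3)*(u2-u3) + (s2-s3)*(u1-u3))
        + c2*(c0+c2)*((s2-s3)*(u2-u3)) = 0 := by
      linear_combination c0*e6 - c0*u3*e2 - c0*s3*e4 + c0*s3*u3*e1
        - c0*(u0-u3)*hrs + (c1*(s1-s3) + c2*(s2-s3))*hru
    obtain ⟨hxs, hys⟩ := hx (c1*(c0+c1)*(s1-s3) + c1*c2*(s2-s3))
        (c1*c2*(s1-s3) + c2*(c0+c2)*(s2-s3))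
        (by linear_combination E5') (by linear_combination E6') (by linear_combination E7')
    have hcne : c0*c1*c2*c3 ≠ 0 :=
      mul_ne_zero (mul_ne_zero (mul_ne_zero h0 h1) h2) h3
    have hs1 : s1 = s3 := by
      have h : c0*c1*c2*c3*(s1-s3) = 0 := by
        linear_combination (c1*c2)*hys - (c2*(c0+c2))*hxs + c0*c1*c2*(s1-s3)*e1
      exact sub_eq_zero.mp ((mul_eq_zero.mp h).resolve_left hcne)
    have hs2 : s2 = s3 := by
      have h : c0*c1*c2*c3*(s2-s3) = 0 := by
        linear_combination (c1*c2)*hxs - (c1*(c0+c1))*hys + c0*c1*c2*(s2-s3)*e1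
      exact sub_eq_zero.mp ((mul_eq_zero.mp h).resolve_left hcne)
    have hs0 : s0 = s3 := by
      have h : c0*(s0-s3) = 0 := by
        linear_combination hrs - c1*(sub_eq_zero.mpr hs1) - c2*(sub_eq_zero.mpr hs2)
      exact sub_eq_zero.mp ((mul_eq_zero.mp h).resolve_left h0)
    -- second round: t
    have E9' : c0*t0^2 + c1*t1^2 + c2*t2^2 + c3*t3^2 = 0 := by
      linear_combination -e9 + s3^3*e1 + c0*(s0^2+s0*s3+s3^2)*hs0
        + c1*(s1^2+s1*s3+s3^2)*hs1 + c2*(s2^2+s2*s3+s3^2)*hs2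
    have E5'' : c1*(c0+c1)*(t1-t3)^2 + 2*(c1*c2)*((t1-t3)*(t2-t3)) + c2*(c0+c2)*(t2-t3)^2
        = 0 := by
      linear_combination c0*E9' - 2*c0*t3*e3 + c0*t3^2*e1
        - (c0*(t0-t3) - c1*(t1-t3) - c2*(t2-t3))*hrt
    have E6'' : c1*(c0+c1)*((t1-t3)*(u1-u3))
        + (c1*c2)*((t1-t3)*(u2-u3) + (t2-t3)*(u1-u3))
        + c2*(c0+c2)*((t2-t3)*(u2-u3)) = 0 := by
      linear_combination c0*e7 - c0*u3*e3 - c0*t3*e4 + c0*t3*u3*e1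
        - c0*(u0-u3)*hrt + (c1*(t1-t3) + c2*(t2-t3))*hru
    obtain ⟨hxt, hyt⟩ := hx (c1*(c0+c1)*(t1-t3) + c1*c2*(t2-t3))
        (c1*c2*(t1-t3) + c2*(c0+c2)*(t2-t3))
        (by linear_combination (c1*(c0+c1)*(t1-t3) + c1*c2*(t2-t3))*hs1
          + (c1*c2*(t1-t3) + c2*(c0+c2)*(t2-t3))*hs2)
        (by linear_combination E5'') (by linear_combination E6'')
    have ht1 : t1 = t3 := by
      have h : c0*c1*c2*c3*(t1-t3) = 0 := by
        linear_combination (c1*c2)*hyt - (c2*(c0+c2))*hxt + c0*c1*c2*(t1-t3)*e1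
      exact sub_eq_zero.mp ((mul_eq_zero.mp h).resolve_left hcne)
    have ht2 : t2 = t3 := by
      have h : c0*c1*c2*c3*(t2-t3) = 0 := by
        linear_combination (c1*c2)*hxt - (c1*(c0+c1))*hyt + c0*c1*c2*(t2-t3)*e1
      exact sub_eq_zero.mp ((mul_eq_zero.mp h).resolve_left hcne)
    -- third round: u
    obtain ⟨hxu, hyu⟩ := hx (u2-u3) (-(u1-u3))
      (by linear_combination (u2-u3)*hs1 - (u1-u3)*hs2)
      (by linear_combination (u2-u3)*ht1 - (u1-u3)*ht2)
      (by ring)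
    exact hd13 ⟨hs1, ht1, by linear_combination -hyu⟩
  · -- collinear case
    push_neg at hx
    obtain ⟨x, y, h1', h2', h3', hxy⟩ := hx
    by_cases hy : y = 0
    · have hxne : x ≠ 0 := fun h => (hxy h) hy
      apply hd13
      refine ⟨?_, ?_, ?_⟩
      · have : x*(s1-s3) = 0 := by linear_combination h1' - (s2-s3)*hy
        exact sub_eq_zero.mp ((mul_eq_zero.mp this).resolve_left hxne)
      · have : x*(t1-t3) = 0 := by linear_combination h2' - (t2-t3)*hy
        exact sub_eq_zero.mp ((mul_eq_zero.mp this).resolve_left hxne)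
      · have : x*(u1-u3) = 0 := by linear_combination h3' - (u2-u3)*hy
        exact sub_eq_zero.mp ((mul_eq_zero.mp this).resolve_left hxne)
    obtain ⟨e, he⟩ : ∃ e : ℂ, y*e = -x := ⟨-x/y, by field_simp; try ring⟩
    have hs2 : s2 = s3 + e*(s1-s3) := by
      have h : y*(s2 - (s3 + e*(s1-s3))) = 0 := by
        linear_combination h1' - (s1-s3)*he
      have := (mul_eq_zero.mp h).resolve_left hy
      linear_combination this
    have ht2 : t2 = t3 + e*(t1-t3) := by
      have h : y*(t2 - (t3 + e*(t1-t3))) = 0 := by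
        linear_combination h2' - (t1-t3)*he
      have := (mul_eq_zero.mp h).resolve_left hy
      linear_combination this
    have hu2 : u2 = u3 + e*(u1-u3) := by
      have h : y*(u2 - (u3 + e*(u1-u3))) = 0 := by
        linear_combination h3' - (u1-u3)*he
      have := (mul_eq_zero.mp h).resolve_left hy
      linear_combination this
    subst hs2 ht2 hu2
    obtain ⟨k, hM1⟩ : ∃ k : ℂ, c0*k + c1 + c2*e = 0 := ⟨-(c1+c2*e)/c0, by field_simp; try ring⟩
    have hs0 : s0 = s3 + k*(s1-s3) := by
      have h : c0*(s0 - (s3 + k*(s1-s3))) = 0 := by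
        linear_combination hrs - (s1-s3)*hM1
      have := (mul_eq_zero.mp h).resolve_left h0
      linear_combination this
    have ht0 : t0 = t3 + k*(t1-t3) := by
      have h : c0*(t0 - (t3 + k*(t1-t3))) = 0 := by
        linear_combination hrt - (t1-t3)*hM1
      have := (mul_eq_zero.mp h).resolve_left h0
      linear_combination this
    have hu0 : u0 = u3 + k*(u1-u3) := by
      have h : c0*(u0 - (u3 + k*(u1-u3))) = 0 := by
        linear_combination hru - (u1-u3)*hM1
      have := (mul_eq_zero.mp h).resolve_left h0
      linear_combination this
    subst hs0 ht0 hu0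
    have hk0 : k ≠ 0 := fun h => hd03 ⟨by rw [h]; ring, by rw [h]; ring, by rw [h]; ring⟩
    have hk1 : k ≠ 1 := fun h => hd01 ⟨by rw [h]; ring, by rw [h]; ring, by rw [h]; ring⟩
    have hke : k ≠ e := fun h => hd02 ⟨by rw [h], by rw [h], by rw [h]⟩
    have hv : ¬(s1 - s3 = 0 ∧ t1 - t3 = 0 ∧ u1 - u3 = 0) := by
      rintro ⟨a, b, c⟩
      exact hd13 ⟨sub_eq_zero.mp a, sub_eq_zero.mp b, sub_eq_zero.mp c⟩
    have A1 : (s1-s3)^2*(c0*k^2+c1+c2*e^2) = 0 := by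
      linear_combination e8 - s3^2*e1 - 2*s3*(s1-s3)*hM1
    have A3 : (s1-s3)^3*(c0*k^3+c1+c2*e^3) + 3*s3*(s1-s3)^2*(c0*k^2+c1+c2*e^2)
        - (t1-t3)^2*(c0*k^2+c1+c2*e^2) = 0 := by
      linear_combination e9 - (s3^3 - t3^2)*e1 - (3*s3^2*(s1-s3) - 2*t3*(t1-t3))*hM1
    have A4 : (t1-t3)^3*(c0*k^3+c1+c2*e^3) + 3*t3*(t1-t3)^2*(c0*k^2+c1+c2*e^2)
        - (u1-u3)^2*(c0*k^2+c1+c2*e^2) = 0 := by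
      linear_combination e10 - (t3^3 - u3^2)*e1 - (3*t3^2*(t1-t3) - 2*u3*(u1-u3))*hM1
    have A5 : (u1-u3)^3*(c0*k^3+c1+c2*e^3) + 3*u3*(u1-u3)^2*(c0*k^2+c1+c2*e^2) = 0 := by
      linear_combination e11 - u3^3*e1 - 3*u3^2*(u1-u3)*hM1
    obtain ⟨hM2, hM3⟩ := Mlem (s1-s3) (t1-t3) (u1-u3) s3 t3 u3 _ _ hv A1 A3 A4 A5
    have hfin : c0*(k*((k-1)*(k-e))) = 0 := by
      linear_combination hM3 - (1+e)*hM2 + e*hM1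
    rcases mul_eq_zero.mp hfin with h | h
    · exact h0 h
    rcases mul_eq_zero.mp h with h | h
    · exact hk0 h
    rcases mul_eq_zero.mp h with h | h
    · exact hk1 (by linear_combination h)
    · exact hke (by linear_combination h)

/-- The map `(s,t,u) ↦ (1,s,t,u,st,su,tu,s²,s³−t²,t³−u²,u³)` is 4-regular. -/
theorem stmt10 :
    ∀ P : Fin 4 → ℂ × ℂ × ℂ, Function.Injective P →
      LinearIndependent ℂ (fun i : Fin 4 => F4 (P i)) := by
  intro P hP
  rw [Fintype.linearIndependent_iff]
  intro g hg
  have h := fun j : Fin 11 => congrFun hg j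
  simp only [Finset.sum_apply, Pi.smul_apply, smul_eq_mul, Fin.sum_univ_four,
    Pi.zero_apply] at h
  have key : ∀ i j : Fin 4, i ≠ j →
      ¬((P i).1 = (P j).1 ∧ (P i).2.1 = (P j).2.1 ∧ (P i).2.2 = (P j).2.2) := by
    intro i j hij hh
    exact hij (hP (Prod.ext hh.1 (Prod.ext hh.2.1 hh.2.2)))
  have e1' : g 0 * (1:ℂ) + g 1 * 1 + g 2 * 1 + g 3 * 1 = 0 := h 0
  have e1 : g 0 + g 1 + g 2 + g 3 = 0 := by linear_combination e1'
  have e2 : g 0 * (P 0).1 + g 1 * (P 1).1 + g 2 * (P 2).1 + g 3 * (P 3).1 = 0 := h 1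
  have e3 : g 0 * (P 0).2.1 + g 1 * (P 1).2.1 + g 2 * (P 2).2.1 + g 3 * (P 3).2.1 = 0 := h 2
  have e4 : g 0 * (P 0).2.2 + g 1 * (P 1).2.2 + g 2 * (P 2).2.2 + g 3 * (P 3).2.2 = 0 := h 3
  have e5 : g 0 * ((P 0).1 * (P 0).2.1) + g 1 * ((P 1).1 * (P 1).2.1)
      + g 2 * ((P 2).1 * (P 2).2.1) + g 3 * ((P 3).1 * (P 3).2.1) = 0 := h 4
  have e6 : g 0 * ((P 0).1 * (P 0).2.2) + g 1 * ((P 1).1 * (P 1).2.2)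
      + g 2 * ((P 2).1 * (P 2).2.2) + g 3 * ((P 3).1 * (P 3).2.2) = 0 := h 5
  have e7 : g 0 * ((P 0).2.1 * (P 0).2.2) + g 1 * ((P 1).2.1 * (P 1).2.2)
      + g 2 * ((P 2).2.1 * (P 2).2.2) + g 3 * ((P 3).2.1 * (P 3).2.2) = 0 := h 6
  have e8 : g 0 * (P 0).1^2 + g 1 * (P 1).1^2 + g 2 * (P 2).1^2 + g 3 * (P 3).1^2 = 0 := h 7
  have e9 : g 0 * ((P 0).1^3 - (P 0).2.1^2) + g 1 * ((P 1).1^3 - (P 1).2.1^2)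
      + g 2 * ((P 2).1^3 - (P 2).2.1^2) + g 3 * ((P 3).1^3 - (P 3).2.1^2) = 0 := h 8
  have e10 : g 0 * ((P 0).2.1^3 - (P 0).2.2^2) + g 1 * ((P 1).2.1^3 - (P 1).2.2^2)
      + g 2 * ((P 2).2.1^3 - (P 2).2.2^2) + g 3 * ((P 3).2.1^3 - (P 3).2.2^2) = 0 := h 9
  have e11 : g 0 * (P 0).2.2^3 + g 1 * (P 1).2.2^3
      + g 2 * (P 2).2.2^3 + g 3 * (P 3).2.2^3 = 0 := h 10
  intro i
  fin_cases i
  · exact L4 (P 0).1 (P 0).2.1 (P 0).2.2 (P 1).1 (P 1).2.1 (P 1).2.2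
      (P 2).1 (P 2).2.1 (P 2).2.2 (P 3).1 (P 3).2.1 (P 3).2.2 (g 0) (g 1) (g 2) (g 3)
      (key 0 1 (by decide)) (key 0 2 (by decide)) (key 0 3 (by decide))
      (key 1 2 (by decide)) (key 1 3 (by decide)) (key 2 3 (by decide))
      e1 e2 e3 e4 e5 e6 e7 e8 e9 e10 e11
  · exact L4 (P 1).1 (P 1).2.1 (P 1).2.2 (P 0).1 (P 0).2.1 (P 0).2.2
      (P 2).1 (P 2).2.1 (P 2).2.2 (P 3).1 (P 3).2.1 (P 3).2.2 (g 1) (g 0) (g 2) (g 3)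
      (key 1 0 (by decide)) (key 1 2 (by decide)) (key 1 3 (by decide))
      (key 0 2 (by decide)) (key 0 3 (by decide)) (key 2 3 (by decide))
      (by linear_combination e1) (by linear_combination e2) (by linear_combination e3)
      (by linear_combination e4) (by linear_combination e5) (by linear_combination e6)
      (by linear_combination e7) (by linear_combination e8) (by linear_combination e9)
      (by linear_combination e10) (by linear_combination e11)
  · exact L4 (P 2).1 (P 2).2.1 (P 2).2.2 (P 0).1 (P 0).2.1 (P 0).2.2
      (P 1).1 (P 1).2.1 (P 1).2.2 (P 3).1 (P 3).2.1 (P 3).2.2 (g 2) (g 0) (g 1) (g 3)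
      (key 2 0 (by decide)) (key 2 1 (by decide)) (key 2 3 (by decide))
      (key 0 1 (by decide)) (key 0 3 (by decide)) (key 1 3 (by decide))
      (by linear_combination e1) (by linear_combination e2) (by linear_combination e3)
      (by linear_combination e4) (by linear_combination e5) (by linear_combination e6)
      (by linear_combination e7) (by linear_combination e8) (by linear_combination e9)
      (by linear_combination e10) (by linear_combination e11)
  · exact L4 (P 3).1 (P 3).2.1 (P 3).2.2 (P 0).1 (P 0).2.1 (P 0).2.2
      (P 1).1 (P 1).2.1 (P 1).2.2 (P 2).1 (P 2).2.1 (P 2).2.2 (g 3) (g 0) (g 1) (g 2)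
      (key 3 0 (by decide)) (key 3 1 (by decide)) (key 3 2 (by decide))
      (key 0 1 (by decide)) (key 0 2 (by decide)) (key 1 2 (by decide))
      (by linear_combination e1) (by linear_combination e2) (by linear_combination e3)
      (by linear_combination e4) (by linear_combination e5) (by linear_combination e6)
      (by linear_combination e7) (by linear_combination e8) (by linear_combination e9)
      (by linear_combination e10) (by linear_combination e11)
end

section
/- The map ℂ³ → ℂ¹⁴ given by (s,t,u) ↦ (1, s, t, u, st, su, tu, s², t², u², u³, t⁴ − s³, u⁴ − t³, s⁴) is 5-regular: the images of any 5 distinct points of ℂ³ are linearly independent in ℂ¹⁴. -/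
set_option maxHeartbeats 1000000

open Finset Matrix

/-- Dual separation: if `x` is not in the span of `{a, b}` in `ℂ⁴`, there is a vector `w`
orthogonal (dot product) to `a` and `b` but not to `x`. -/
lemma exists_w (a b x : Fin 4 → ℂ) (hx : x ∉ Submodule.span ℂ {a, b}) :
    ∃ w : Fin 4 → ℂ, w ⬝ᵥ a = 0 ∧ w ⬝ᵥ b = 0 ∧ w ⬝ᵥ x ≠ 0 := by
  classical
  set U : Submodule ℂ (Fin 4 → ℂ) := Submodule.span ℂ {a, b} with hU
  have hq : U.mkQ x ≠ 0 := by
    simpa [Submodule.Quotient.mk_eq_zero] using hx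
  have : ¬ (∀ φ : Module.Dual ℂ (_ ⧸ U), φ (U.mkQ x) = 0) := by
    rw [Module.forall_dual_apply_eq_zero_iff]
    exact hq
  push_neg at this
  obtain ⟨g, hg⟩ := this
  set φ : (Fin 4 → ℂ) →ₗ[ℂ] ℂ := g.comp U.mkQ with hφ
  have hdot : ∀ y : Fin 4 → ℂ, (fun j => φ (Pi.single j 1)) ⬝ᵥ y = φ y := by
    intro y
    have hy : y = ∑ j, y j • (Pi.single j 1 : Fin 4 → ℂ) := by
      funext j'
      simp [Pi.single_apply, Finset.sum_apply, mul_ite]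
    calc (fun j => φ (Pi.single j 1)) ⬝ᵥ y
        = ∑ j, y j * φ (Pi.single j 1) := by
          simp [dotProduct, mul_comm]
      _ = φ y := by
          conv_rhs => rw [hy, map_sum]
          simp [smul_eq_mul]
  refine ⟨fun j => φ (Pi.single j 1), ?_, ?_, ?_⟩
  · rw [hdot]
    have ha : a ∈ U := Submodule.subset_span (by simp)
    simp [hφ, (Submodule.Quotient.mk_eq_zero U).2 ha]
  · rw [hdot]
    have hb : b ∈ U := Submodule.subset_span (by simp)
    simp [hφ, (Submodule.Quotient.mk_eq_zero U).2 hb]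
  · rw [hdot]
    exact hg


open Finset Polynomial

/-- If a "measure" on 5 points (with distinct coordinates on its support) kills the moments
`1, x, x², x³, x⁴`, then it is zero. -/
lemma vand (c x : Fin 5 → ℂ)
    (hinj : ∀ i j, c i ≠ 0 → c j ≠ 0 → x i = x j → i = j)
    (h : ∀ k, k < 5 → ∑ i, c i * x i ^ k = 0) : ∀ i, c i = 0 := by
  classical
  intro i
  by_contra hi
  set S : Finset (Fin 5) := univ.filter (fun j => j ≠ i ∧ c j ≠ 0) with hS
  set q : ℂ[X] := ∏ k ∈ S, (X - C (x k)) with hq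
  have hdeg : q.natDegree < 5 := by
    have h1 : q.natDegree = S.card := by
      rw [hq, natDegree_prod]
      · simp
      · intro k _
        exact X_sub_C_ne_zero _
    have h2 : S.card ≤ 4 := by
      have : S ⊆ univ.erase i := by
        intro j hj
        simp only [hS, mem_filter] at hj
        exact mem_erase.2 ⟨hj.2.1, mem_univ _⟩
      calc S.card ≤ (univ.erase i).card := card_le_card this
        _ = 4 := by simp
    omega
  have key : ∑ j, c j * q.eval (x j) = 0 := by
    have expand : ∀ j, q.eval (x j) = ∑ m ∈ range 5, q.coeff m * (x j) ^ m := fun j =>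
      eval_eq_sum_range' hdeg _
    calc ∑ j, c j * q.eval (x j)
        = ∑ j, ∑ m ∈ range 5, q.coeff m * (c j * x j ^ m) := by
          refine Finset.sum_congr rfl fun j _ => ?_
          rw [expand j, Finset.mul_sum]
          exact Finset.sum_congr rfl fun m _ => by ring
      _ = ∑ m ∈ range 5, q.coeff m * ∑ j, c j * x j ^ m := by
          rw [Finset.sum_comm]
          exact Finset.sum_congr rfl fun m _ => by rw [Finset.mul_sum]
      _ = 0 := by
          refine Finset.sum_eq_zero fun m hm => ?_
          rw [h m (mem_range.1 hm), mul_zero]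
  have hsingle : ∑ j, c j * q.eval (x j) = c i * q.eval (x i) := by
    refine Finset.sum_eq_single i (fun j _ hj => ?_) (by simp)
    by_cases hcj : c j = 0
    · simp [hcj]
    · have hjS : j ∈ S := by simp [hS, hj, hcj]
      have : q.eval (x j) = 0 := by
        rw [hq, eval_prod]
        exact Finset.prod_eq_zero hjS (by simp)
      simp [this]
  have hne : q.eval (x i) ≠ 0 := by
    rw [hq, eval_prod]
    refine Finset.prod_ne_zero_iff.2 fun k hk => ?_
    simp only [hS, mem_filter] at hk
    have : x i ≠ x k := fun hxy => hk.2.1 (hinj k i hk.2.2 hi hxy.symm)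
    simpa [sub_eq_zero] using this
  rw [hsingle] at key
  exact hi (by
    rcases mul_eq_zero.1 key with h' | h'
    · exact h'
    · exact absurd h' hne)

open Finset Matrix

lemma sum5 (f : Fin 5 → ℂ) (i j k l m : Fin 5)
    (hcov : ∀ r, r = i ∨ r = j ∨ r = k ∨ r = l ∨ r = m)
    (hij : i ≠ j) (hik : i ≠ k) (hil : i ≠ l) (him : i ≠ m)
    (hjk : j ≠ k) (hjl : j ≠ l) (hjm : j ≠ m)
    (hkl : k ≠ l) (hkm : k ≠ m) (hlm : l ≠ m) :
    ∑ r, f r = f i + f j + f k + f l + f m := by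
  have huniv : (univ : Finset (Fin 5)) = {i, j, k, l, m} := by
    ext r
    simpa using hcov r
  rw [huniv, Finset.sum_insert (by simp [hij, hik, hil, him]),
    Finset.sum_insert (by simp [hjk, hjl, hjm]),
    Finset.sum_insert (by simp [hkl, hkm]),
    Finset.sum_pair hlm]
  ring

/-- core separation: if `v i, v j, v k` are independent and `v i ∉ span {v l, v m}`,
then `c i = 0`. -/
lemma kill (v : Fin 5 → Fin 4 → ℂ) (c : Fin 5 → ℂ)
    (H : ∀ w z : Fin 4 → ℂ, ∑ r, c r * ((w ⬝ᵥ v r) * (z ⬝ᵥ v r)) = 0)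
    (i j k l m : Fin 5)
    (hcov : ∀ r, r = i ∨ r = j ∨ r = k ∨ r = l ∨ r = m)
    (hij : i ≠ j) (hik : i ≠ k) (hil : i ≠ l) (him : i ≠ m)
    (hjk : j ≠ k) (hjl : j ≠ l) (hjm : j ≠ m)
    (hkl : k ≠ l) (hkm : k ≠ m) (hlm : l ≠ m)
    (hind : LinearIndependent ℂ ![v i, v j, v k])
    (hni : v i ∉ Submodule.span ℂ {v l, v m}) : c i = 0 := by
  classical
  obtain ⟨w, hwl, hwm, hwi⟩ := exists_w (v l) (v m) (v i) hni
  have hvec : (c i * (w ⬝ᵥ v i)) • v i + (c j * (w ⬝ᵥ v j)) • v j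
      + (c k * (w ⬝ᵥ v k)) • v k = 0 := by
    funext a
    have hz := H w (Pi.single a 1)
    rw [sum5 (fun r => c r * ((w ⬝ᵥ v r) * ((Pi.single a 1 : Fin 4 → ℂ) ⬝ᵥ v r))) i j k l m hcov
      hij hik hil him hjk hjl hjm hkl hkm hlm] at hz
    have hsingle : ∀ y : Fin 4 → ℂ, (Pi.single a 1 : Fin 4 → ℂ) ⬝ᵥ y = y a := by
      intro y
      simp [dotProduct, Pi.single_apply]
    simp only [hsingle, hwl, hwm] at hz
    simp only [Pi.add_apply, Pi.smul_apply, Pi.zero_apply, smul_eq_mul]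
    linear_combination hz
  have h3 := Fintype.linearIndependent_iff.1 hind
    ![c i * (w ⬝ᵥ v i), c j * (w ⬝ᵥ v j), c k * (w ⬝ᵥ v k)] (by
      rw [Fin.sum_univ_three]
      simpa using hvec) 0
  simp only [Matrix.cons_val_zero] at h3
  rcases mul_eq_zero.1 h3 with h' | h'
  · exact h'
  · exact absurd h' hwi

/-- The map `(s,t,u) ↦ (1,s,t,u,st,su,tu,s²,t²,u²,u³,t⁴−s³,u⁴−t³,s⁴)` from `ℂ³` to `ℂ¹⁴`. -/
noncomputable def F5 : ℂ × ℂ × ℂ → Fin 14 → ℂ := fun p =>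
  ![1, p.1, p.2.1, p.2.2, p.1 * p.2.1, p.1 * p.2.2, p.2.1 * p.2.2,
    p.1 ^ 2, p.2.1 ^ 2, p.2.2 ^ 2, p.2.2 ^ 3,
    p.2.1 ^ 4 - p.1 ^ 3, p.2.2 ^ 4 - p.2.1 ^ 3, p.1 ^ 4]


section Main

open Finset Matrix Module Submodule

/-- The map `(s,t,u) ↦ (1,s,t,u,st,su,tu,s²,t²,u²,u³,t⁴−s³,u⁴−t³,s⁴)` is 5-regular. -/
theorem stmt11 :
    ∀ P : Fin 5 → ℂ × ℂ × ℂ, Function.Injective P →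
      LinearIndependent ℂ (fun i : Fin 5 => F5 (P i)) := by
  intro P hP
  rw [Fintype.linearIndependent_iff]
  intro c hc
  by_contra hne
  push_neg at hne
  obtain ⟨i₀, hi₀⟩ := hne
  classical
  have E : ∀ j : Fin 14, ∑ i, c i * F5 (P i) j = 0 := by
    intro j
    have := congrFun hc j
    simpa [Finset.sum_apply] using this
  have e0 : ∑ i, c i = 0 := by simpa [F5] using E 0
  have e1 : ∑ i, c i * (P i).1 = 0 := by simpa [F5] using E 1
  have e2 : ∑ i, c i * (P i).2.1 = 0 := by simpa [F5] using E 2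
  have e3 : ∑ i, c i * (P i).2.2 = 0 := by simpa [F5] using E 3
  have e4 : ∑ i, c i * ((P i).1 * (P i).2.1) = 0 := by simpa [F5] using E 4
  have e5 : ∑ i, c i * ((P i).1 * (P i).2.2) = 0 := by simpa [F5] using E 5
  have e6 : ∑ i, c i * ((P i).2.1 * (P i).2.2) = 0 := by simpa [F5] using E 6
  have e7 : ∑ i, c i * (P i).1 ^ 2 = 0 := by simpa [F5] using E 7
  have e8 : ∑ i, c i * (P i).2.1 ^ 2 = 0 := by simpa [F5] using E 8
  have e9 : ∑ i, c i * (P i).2.2 ^ 2 = 0 := by simpa [F5] using E 9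
  have e10 : ∑ i, c i * (P i).2.2 ^ 3 = 0 := by simpa [F5] using E 10
  have e11 : ∑ i, c i * ((P i).2.1 ^ 4 - (P i).1 ^ 3) = 0 := by simpa [F5] using E 11
  have e12 : ∑ i, c i * ((P i).2.2 ^ 4 - (P i).2.1 ^ 3) = 0 := by simpa [F5] using E 12
  have e13 : ∑ i, c i * (P i).1 ^ 4 = 0 := by simpa [F5] using E 13
  -- the affine lifts
  set v : Fin 5 → Fin 4 → ℂ := fun r => ![(1 : ℂ), (P r).1, (P r).2.1, (P r).2.2] with hv
  have hvval : ∀ r, v r 0 = 1 ∧ v r 1 = (P r).1 ∧ v r 2 = (P r).2.1 ∧ v r 3 = (P r).2.2 := by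
    intro r; refine ⟨rfl, rfl, rfl, rfl⟩
  -- pairwise independence
  have hpairind : ∀ a b : Fin 5, a ≠ b → LinearIndependent ℂ ![v a, v b] := by
    intro a b hab
    rw [linearIndependent_fin2]
    constructor
    · intro h0
      have := congrFun h0 0
      simp [hv] at this
    · intro α hα
      have h0 := congrFun hα 0
      simp [hv] at h0
      subst h0
      have h1 := congrFun hα 1
      have h2 := congrFun hα 2
      have h3 := congrFun hα 3
      simp [hv] at h1 h2 h3
      exact hab (hP (Prod.ext h1 (Prod.ext h2 h3))).symm
  -- the bilinear relation
  have H : ∀ w z : Fin 4 → ℂ, ∑ r, c r * ((w ⬝ᵥ v r) * (z ⬝ᵥ v r)) = 0 := by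
    intro w z
    simp only [Fin.sum_univ_five] at e0 e1 e2 e3 e4 e5 e6 e7 e8 e9 ⊢
    simp only [hv, dotProduct, Fin.sum_univ_four, Matrix.cons_val_zero,
      Matrix.cons_val_one, Matrix.head_cons, Matrix.cons_val_two, Matrix.tail_cons,
      Matrix.cons_val_three]
    linear_combination (w 0 * z 0) * e0 + (w 0 * z 1 + w 1 * z 0) * e1 +
      (w 0 * z 2 + w 2 * z 0) * e2 + (w 0 * z 3 + w 3 * z 0) * e3 +
      (w 1 * z 2 + w 2 * z 1) * e4 + (w 1 * z 3 + w 3 * z 1) * e5 +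
      (w 2 * z 3 + w 3 * z 2) * e6 + (w 1 * z 1) * e7 + (w 2 * z 2) * e8 + (w 3 * z 3) * e9
  -- no independent triple in the support
  have H3 : ∀ i j k : Fin 5, i ≠ j → i ≠ k → j ≠ k → c i ≠ 0 → c j ≠ 0 → c k ≠ 0 →
      ¬ LinearIndependent ℂ ![v i, v j, v k] := by
    intro i j k hij hik hjk hci hcj hck hind
    have hcard : ({i, j, k}ᶜ : Finset (Fin 5)).card = 2 := by
      rw [Finset.card_compl]
      rw [Finset.card_insert_of_notMem (by simp [hij, hik]),
        Finset.card_insert_of_notMem (by simp [hjk]), Finset.card_singleton]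
      rfl
    obtain ⟨l, m, hlm, hC⟩ := Finset.card_eq_two.1 hcard
    have hl : l ∈ ({i, j, k}ᶜ : Finset (Fin 5)) := by rw [hC]; simp
    have hm : m ∈ ({i, j, k}ᶜ : Finset (Fin 5)) := by rw [hC]; simp
    simp only [Finset.mem_compl, Finset.mem_insert, Finset.mem_singleton, not_or] at hl hm
    obtain ⟨hli, hlj, hlk⟩ := hl
    obtain ⟨hmi, hmj, hmk⟩ := hm
    have hcov : ∀ r, r = i ∨ r = j ∨ r = k ∨ r = l ∨ r = m := by
      intro r
      by_cases hr : r ∈ ({i, j, k} : Finset (Fin 5))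
      · simp only [Finset.mem_insert, Finset.mem_singleton] at hr; tauto
      · have : r ∈ ({i, j, k}ᶜ : Finset (Fin 5)) := Finset.mem_compl.2 hr
        rw [hC] at this
        simp only [Finset.mem_insert, Finset.mem_singleton] at this; tauto
    have hnotall : ¬ (v i ∈ Submodule.span ℂ {v l, v m} ∧ v j ∈ Submodule.span ℂ {v l, v m}
        ∧ v k ∈ Submodule.span ℂ {v l, v m}) := by
      rintro ⟨h1, h2, h3⟩
      have hle : Submodule.span ℂ (Set.range ![v i, v j, v k]) ≤ Submodule.span ℂ {v l, v m} := by
        rw [Submodule.span_le]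
        rintro y ⟨r, rfl⟩
        fin_cases r <;> simpa using ‹_›
      have hr3 : finrank ℂ (Submodule.span ℂ (Set.range ![v i, v j, v k])) = 3 := by
        rw [finrank_span_eq_card hind]; simp
      have hr2 : finrank ℂ (Submodule.span ℂ ({v l, v m} : Set (Fin 4 → ℂ))) ≤ 2 := by
        refine le_trans (finrank_span_le_card _) ?_
        simp only [Set.toFinset_insert, Set.toFinset_singleton]
        exact le_trans (Finset.card_insert_le _ _) (by simp)
      have := Submodule.finrank_mono hle
      omega
    by_cases h1 : v i ∈ Submodule.span ℂ {v l, v m}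
    · by_cases h2 : v j ∈ Submodule.span ℂ {v l, v m}
      · by_cases h3 : v k ∈ Submodule.span ℂ {v l, v m}
        · exact hnotall ⟨h1, h2, h3⟩
        · -- v k outside: permute to (k, i, j)
          have hind' : LinearIndependent ℂ ![v k, v i, v j] := by
            have heq : ![v k, v i, v j] = ![v i, v j, v k] ∘ ![2, 0, 1] := by
              funext r; fin_cases r <;> rfl
            rw [heq]
            exact hind.comp _ (by decide)
          exact hck (kill v c H k i j l m (by intro r; rcases hcov r with h|h|h|h|h <;> tauto)
            hik.symm hjk.symm (Ne.symm hlk) (Ne.symm hmk) hij (Ne.symm hli) (Ne.symm hmi)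
            (Ne.symm hlj) (Ne.symm hmj) hlm hind' h3)
      · -- v j outside: permute to (j, i, k)
        have hind' : LinearIndependent ℂ ![v j, v i, v k] := by
          have heq : ![v j, v i, v k] = ![v i, v j, v k] ∘ ![1, 0, 2] := by
            funext r; fin_cases r <;> rfl
          rw [heq]
          exact hind.comp _ (by decide)
        exact hcj (kill v c H j i k l m (by intro r; rcases hcov r with h|h|h|h|h <;> tauto)
          hij.symm hjk (Ne.symm hlj) (Ne.symm hmj) hik (Ne.symm hli) (Ne.symm hmi)
          (Ne.symm hlk) (Ne.symm hmk) hlm hind' h2)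
    · exact hci (kill v c H i j k l m hcov hij hik (Ne.symm hli) (Ne.symm hmi) hjk
        (Ne.symm hlj) (Ne.symm hmj) (Ne.symm hlk) (Ne.symm hmk) hlm hind h1)
  -- find a second support point
  by_cases hone : ∀ j, j ≠ i₀ → c j = 0
  · have hsum : ∑ r, c r = c i₀ := Finset.sum_eq_single i₀ (fun j _ hj => hone j hj) (by simp)
    exact hi₀ (by rw [← hsum]; exact e0)
  push_neg at hone
  obtain ⟨j₀, hj₀ne, hj₀⟩ := hone
  have hij₀ : i₀ ≠ j₀ := fun h => hj₀ne h.symm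
  -- every support point is in the span of v i₀, v j₀
  have hspan : ∀ r, c r ≠ 0 → v r ∈ Submodule.span ℂ ({v i₀, v j₀} : Set (Fin 4 → ℂ)) := by
    intro r hr
    by_cases hri : r = i₀
    · subst hri; exact Submodule.subset_span (by simp)
    by_cases hrj : r = j₀
    · subst hrj; exact Submodule.subset_span (by simp)
    have hni := H3 r i₀ j₀ hri hrj hij₀ hr hi₀ hj₀
    have hpair := hpairind i₀ j₀ hij₀
    have hmem : v r ∈ Submodule.span ℂ (Set.range ![v i₀, v j₀]) := by
      by_contra hmem
      exact hni (by
        rw [show (![v r, v i₀, v j₀] : Fin 3 → Fin 4 → ℂ)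
          = Fin.cons (v r) ![v i₀, v j₀] from rfl, linearIndependent_fin_cons]
        exact ⟨hpair, hmem⟩)
    have hrange : Set.range ![v i₀, v j₀] = ({v i₀, v j₀} : Set (Fin 4 → ℂ)) := by
      ext y
      constructor
      · rintro ⟨r, rfl⟩
        fin_cases r
        · exact Set.mem_insert _ _
        · exact Set.mem_insert_of_mem _ rfl
      · intro hy
        rcases hy with rfl | hy
        · exact ⟨0, rfl⟩
        · exact ⟨1, hy.symm⟩
    rwa [hrange] at hmem
  -- parametrize the line
  have hline : ∀ r, ∃ γ : ℂ, c r ≠ 0 → P r = P j₀ + γ • (P i₀ - P j₀) := by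
    intro r
    by_cases hr : c r = 0
    · exact ⟨0, fun h => absurd hr h⟩
    · obtain ⟨α, β, hαβ⟩ := Submodule.mem_span_pair.1 (hspan r hr)
      refine ⟨α, fun _ => ?_⟩
      have h0 := congrFun hαβ 0
      have h1 := congrFun hαβ 1
      have h2 := congrFun hαβ 2
      have h3 := congrFun hαβ 3
      simp [hv] at h0 h1 h2 h3
      refine Prod.ext ?_ (Prod.ext ?_ ?_)
      · simp only [Prod.fst_add, Prod.smul_fst, Prod.fst_sub, smul_eq_mul]
        linear_combination -h1 + (P j₀).1 * h0
      · simp only [Prod.snd_add, Prod.smul_snd, Prod.snd_sub, Prod.fst_add, Prod.smul_fst,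
          Prod.fst_sub, smul_eq_mul]
        linear_combination -h2 + (P j₀).2.1 * h0
      · simp only [Prod.snd_add, Prod.smul_snd, Prod.snd_sub, smul_eq_mul]
        linear_combination -h3 + (P j₀).2.2 * h0
  choose x hx using hline
  have hinj : ∀ a b, c a ≠ 0 → c b ≠ 0 → x a = x b → a = b := by
    intro a b ha hb hab
    apply hP
    rw [hx a ha, hx b hb, hab]
  -- substitution facts
  have hsr : ∀ r, c r ≠ 0 → (P r).1 = (P j₀).1 + x r * ((P i₀).1 - (P j₀).1) := by
    intro r hr
    have := congrArg Prod.fst (hx r hr)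
    simpa [Prod.fst_add, Prod.smul_fst, Prod.fst_sub, smul_eq_mul] using this
  have htr : ∀ r, c r ≠ 0 → (P r).2.1 = (P j₀).2.1 + x r * ((P i₀).2.1 - (P j₀).2.1) := by
    intro r hr
    have := congrArg (fun p => p.2.1) (hx r hr)
    simpa [Prod.snd_add, Prod.smul_snd, Prod.snd_sub, Prod.fst_add, Prod.smul_fst,
      Prod.fst_sub, smul_eq_mul] using this
  have hur : ∀ r, c r ≠ 0 → (P r).2.2 = (P j₀).2.2 + x r * ((P i₀).2.2 - (P j₀).2.2) := by
    intro r hr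
    have := congrArg (fun p => p.2.2) (hx r hr)
    simpa [Prod.snd_add, Prod.smul_snd, Prod.snd_sub, smul_eq_mul] using this
  have key : ∀ f g : Fin 5 → ℂ, (∀ r, c r ≠ 0 → f r = g r) →
      ∑ r, c r * f r = ∑ r, c r * g r := by
    intro f g h
    refine Finset.sum_congr rfl fun r _ => ?_
    by_cases hr : c r = 0
    · simp [hr]
    · rw [h r hr]
  -- abbreviations for the line data
  set a1 := (P j₀).1 with ha1
  set a2 := (P j₀).2.1 with ha2
  set a3 := (P j₀).2.2 with ha3
  set d1 := (P i₀).1 - (P j₀).1 with hd1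
  set d2 := (P i₀).2.1 - (P j₀).2.1 with hd2
  set d3 := (P i₀).2.2 - (P j₀).2.2 with hd3
  have hdne : d1 ≠ 0 ∨ d2 ≠ 0 ∨ d3 ≠ 0 := by
    by_contra hcon
    push_neg at hcon
    obtain ⟨hc1, hc2, hc3⟩ := hcon
    apply hij₀
    apply hP
    refine Prod.ext ?_ (Prod.ext ?_ ?_)
    · rw [hd1] at hc1; exact sub_eq_zero.1 hc1
    · rw [hd2] at hc2; exact sub_eq_zero.1 hc2
    · rw [hd3] at hc3; exact sub_eq_zero.1 hc3
  -- equations in line coordinates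
  have E1 : ∑ r, c r * (a1 + x r * d1) = 0 := (key _ _ hsr).symm.trans e1
  have E2 : ∑ r, c r * (a2 + x r * d2) = 0 := (key _ _ htr).symm.trans e2
  have E3 : ∑ r, c r * (a3 + x r * d3) = 0 := (key _ _ hur).symm.trans e3
  have E7 : ∑ r, c r * (a1 + x r * d1) ^ 2 = 0 :=
    (key _ _ (fun r hr => by rw [hsr r hr])).symm.trans e7
  have E8 : ∑ r, c r * (a2 + x r * d2) ^ 2 = 0 :=
    (key _ _ (fun r hr => by rw [htr r hr])).symm.trans e8
  have E9 : ∑ r, c r * (a3 + x r * d3) ^ 2 = 0 :=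
    (key _ _ (fun r hr => by rw [hur r hr])).symm.trans e9
  have E10 : ∑ r, c r * (a3 + x r * d3) ^ 3 = 0 :=
    (key _ _ (fun r hr => by rw [hur r hr])).symm.trans e10
  have E11 : ∑ r, c r * ((a2 + x r * d2) ^ 4 - (a1 + x r * d1) ^ 3) = 0 :=
    (key _ _ (fun r hr => by rw [htr r hr, hsr r hr])).symm.trans e11
  have E12 : ∑ r, c r * ((a3 + x r * d3) ^ 4 - (a2 + x r * d2) ^ 3) = 0 :=
    (key _ _ (fun r hr => by rw [hur r hr, htr r hr])).symm.trans e12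
  have E13 : ∑ r, c r * (a1 + x r * d1) ^ 4 = 0 :=
    (key _ _ (fun r hr => by rw [hsr r hr])).symm.trans e13
  -- moments
  simp only [Fin.sum_univ_five] at e0 E1 E2 E3 E7 E8 E9 E10 E11 E12 E13
  have m1 : c 0 * x 0 + c 1 * x 1 + c 2 * x 2 + c 3 * x 3 + c 4 * x 4 = 0 := by
    have q1 : d1 * (c 0 * x 0 + c 1 * x 1 + c 2 * x 2 + c 3 * x 3 + c 4 * x 4) = 0 := by
      linear_combination E1 - a1 * e0
    have q2 : d2 * (c 0 * x 0 + c 1 * x 1 + c 2 * x 2 + c 3 * x 3 + c 4 * x 4) = 0 := by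
      linear_combination E2 - a2 * e0
    have q3 : d3 * (c 0 * x 0 + c 1 * x 1 + c 2 * x 2 + c 3 * x 3 + c 4 * x 4) = 0 := by
      linear_combination E3 - a3 * e0
    rcases hdne with h | h | h
    · exact (mul_eq_zero.1 q1).resolve_left h
    · exact (mul_eq_zero.1 q2).resolve_left h
    · exact (mul_eq_zero.1 q3).resolve_left h
  have m2 : c 0 * x 0 ^ 2 + c 1 * x 1 ^ 2 + c 2 * x 2 ^ 2 + c 3 * x 3 ^ 2 + c 4 * x 4 ^ 2 = 0 := by
    have q1 : d1 ^ 2 * (c 0 * x 0 ^ 2 + c 1 * x 1 ^ 2 + c 2 * x 2 ^ 2 + c 3 * x 3 ^ 2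
        + c 4 * x 4 ^ 2) = 0 := by
      linear_combination E7 - a1 ^ 2 * e0 - 2 * a1 * d1 * m1
    have q2 : d2 ^ 2 * (c 0 * x 0 ^ 2 + c 1 * x 1 ^ 2 + c 2 * x 2 ^ 2 + c 3 * x 3 ^ 2
        + c 4 * x 4 ^ 2) = 0 := by
      linear_combination E8 - a2 ^ 2 * e0 - 2 * a2 * d2 * m1
    have q3 : d3 ^ 2 * (c 0 * x 0 ^ 2 + c 1 * x 1 ^ 2 + c 2 * x 2 ^ 2 + c 3 * x 3 ^ 2
        + c 4 * x 4 ^ 2) = 0 := by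
      linear_combination E9 - a3 ^ 2 * e0 - 2 * a3 * d3 * m1
    rcases hdne with h | h | h
    · exact (mul_eq_zero.1 q1).resolve_left (pow_ne_zero 2 h)
    · exact (mul_eq_zero.1 q2).resolve_left (pow_ne_zero 2 h)
    · exact (mul_eq_zero.1 q3).resolve_left (pow_ne_zero 2 h)
  -- the degree 3 and 4 moments
  have q10 : d3 ^ 3 * (c 0 * x 0 ^ 3 + c 1 * x 1 ^ 3 + c 2 * x 2 ^ 3 + c 3 * x 3 ^ 3 + c 4 * x 4 ^ 3) = 0 := by
    linear_combination E10 - a3 ^ 3 * e0 - 3 * a3 ^ 2 * d3 * m1 - 3 * a3 * d3 ^ 2 * m2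
  have r11 : d2 ^ 4 * (c 0 * x 0 ^ 4 + c 1 * x 1 ^ 4 + c 2 * x 2 ^ 4 + c 3 * x 3 ^ 4 + c 4 * x 4 ^ 4) + (4 * a2 * d2 ^ 3 - d1 ^ 3) * (c 0 * x 0 ^ 3 + c 1 * x 1 ^ 3 + c 2 * x 2 ^ 3 + c 3 * x 3 ^ 3 + c 4 * x 4 ^ 3) = 0 := by
    linear_combination E11 - (a2 ^ 4 - a1 ^ 3) * e0 - (4 * a2 ^ 3 * d2 - 3 * a1 ^ 2 * d1) * m1
      - (6 * a2 ^ 2 * d2 ^ 2 - 3 * a1 * d1 ^ 2) * m2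
  have r12 : d3 ^ 4 * (c 0 * x 0 ^ 4 + c 1 * x 1 ^ 4 + c 2 * x 2 ^ 4 + c 3 * x 3 ^ 4 + c 4 * x 4 ^ 4) + (4 * a3 * d3 ^ 3 - d2 ^ 3) * (c 0 * x 0 ^ 3 + c 1 * x 1 ^ 3 + c 2 * x 2 ^ 3 + c 3 * x 3 ^ 3 + c 4 * x 4 ^ 3) = 0 := by
    linear_combination E12 - (a3 ^ 4 - a2 ^ 3) * e0 - (4 * a3 ^ 3 * d3 - 3 * a2 ^ 2 * d2) * m1
      - (6 * a3 ^ 2 * d3 ^ 2 - 3 * a2 * d2 ^ 2) * m2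
  have r13 : d1 ^ 4 * (c 0 * x 0 ^ 4 + c 1 * x 1 ^ 4 + c 2 * x 2 ^ 4 + c 3 * x 3 ^ 4 + c 4 * x 4 ^ 4) + 4 * a1 * d1 ^ 3 * (c 0 * x 0 ^ 3 + c 1 * x 1 ^ 3 + c 2 * x 2 ^ 3 + c 3 * x 3 ^ 3 + c 4 * x 4 ^ 3) = 0 := by
    linear_combination E13 - a1 ^ 4 * e0 - 4 * a1 ^ 3 * d1 * m1 - 6 * a1 ^ 2 * d1 ^ 2 * m2
  have hm34 : (c 0 * x 0 ^ 3 + c 1 * x 1 ^ 3 + c 2 * x 2 ^ 3 + c 3 * x 3 ^ 3 + c 4 * x 4 ^ 3) = 0 ∧ (c 0 * x 0 ^ 4 + c 1 * x 1 ^ 4 + c 2 * x 2 ^ 4 + c 3 * x 3 ^ 4 + c 4 * x 4 ^ 4) = 0 := by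
    by_cases h3 : d3 = 0
    · by_cases h2 : d2 = 0
      · have h1 : d1 ≠ 0 := by tauto
        have hm3 : (c 0 * x 0 ^ 3 + c 1 * x 1 ^ 3 + c 2 * x 2 ^ 3 + c 3 * x 3 ^ 3 + c 4 * x 4 ^ 3) = 0 := by
          have hq : d1 ^ 3 * (c 0 * x 0 ^ 3 + c 1 * x 1 ^ 3 + c 2 * x 2 ^ 3 + c 3 * x 3 ^ 3 + c 4 * x 4 ^ 3) = 0 := by
            rw [h2] at r11
            linear_combination -r11
          exact (mul_eq_zero.1 hq).resolve_left (pow_ne_zero 3 h1)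
        have hm4 : (c 0 * x 0 ^ 4 + c 1 * x 1 ^ 4 + c 2 * x 2 ^ 4 + c 3 * x 3 ^ 4 + c 4 * x 4 ^ 4) = 0 := by
          have hq : d1 ^ 4 * (c 0 * x 0 ^ 4 + c 1 * x 1 ^ 4 + c 2 * x 2 ^ 4 + c 3 * x 3 ^ 4 + c 4 * x 4 ^ 4) = 0 := by linear_combination r13 - 4 * a1 * d1 ^ 3 * hm3
          exact (mul_eq_zero.1 hq).resolve_left (pow_ne_zero 4 h1)
        exact ⟨hm3, hm4⟩
      · have hm3 : (c 0 * x 0 ^ 3 + c 1 * x 1 ^ 3 + c 2 * x 2 ^ 3 + c 3 * x 3 ^ 3 + c 4 * x 4 ^ 3) = 0 := by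
          have hq : d2 ^ 3 * (c 0 * x 0 ^ 3 + c 1 * x 1 ^ 3 + c 2 * x 2 ^ 3 + c 3 * x 3 ^ 3 + c 4 * x 4 ^ 3) = 0 := by
            rw [h3] at r12
            linear_combination -r12
          exact (mul_eq_zero.1 hq).resolve_left (pow_ne_zero 3 h2)
        have hm4 : (c 0 * x 0 ^ 4 + c 1 * x 1 ^ 4 + c 2 * x 2 ^ 4 + c 3 * x 3 ^ 4 + c 4 * x 4 ^ 4) = 0 := by
          have hq : d2 ^ 4 * (c 0 * x 0 ^ 4 + c 1 * x 1 ^ 4 + c 2 * x 2 ^ 4 + c 3 * x 3 ^ 4 + c 4 * x 4 ^ 4) = 0 := by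
            linear_combination r11 - (4 * a2 * d2 ^ 3 - d1 ^ 3) * hm3
          exact (mul_eq_zero.1 hq).resolve_left (pow_ne_zero 4 h2)
        exact ⟨hm3, hm4⟩
    · have hm3 : (c 0 * x 0 ^ 3 + c 1 * x 1 ^ 3 + c 2 * x 2 ^ 3 + c 3 * x 3 ^ 3 + c 4 * x 4 ^ 3) = 0 := (mul_eq_zero.1 q10).resolve_left (pow_ne_zero 3 h3)
      have hm4 : (c 0 * x 0 ^ 4 + c 1 * x 1 ^ 4 + c 2 * x 2 ^ 4 + c 3 * x 3 ^ 4 + c 4 * x 4 ^ 4) = 0 := by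
        have hq : d3 ^ 4 * (c 0 * x 0 ^ 4 + c 1 * x 1 ^ 4 + c 2 * x 2 ^ 4 + c 3 * x 3 ^ 4 + c 4 * x 4 ^ 4) = 0 := by
          linear_combination r12 - (4 * a3 * d3 ^ 3 - d2 ^ 3) * hm3
        exact (mul_eq_zero.1 hq).resolve_left (pow_ne_zero 4 h3)
      exact ⟨hm3, hm4⟩
  have hall := vand c x hinj (by
    intro k hk
    interval_cases k
    · simpa [Fin.sum_univ_five] using e0
    · simpa [Fin.sum_univ_five] using m1
    · simpa [Fin.sum_univ_five] using m2
    · simpa [Fin.sum_univ_five] using hm34.1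
    · simpa [Fin.sum_univ_five] using hm34.2)
  exact hi₀ (hall i₀)

end Main
end

section
/- The map ℂⁿ → ℂ^{C(n+k-2,k-2)+n} given by all monomials of degree at most k−2 together with the n pure powers x₁^{k−1},…,xₙ^{k−1} is k-regular. -/
open Finset MvPolynomial

private lemma auxMv {n k : ℕ} (P : Fin k → Fin n → ℂ) (c : Fin k → ℂ)
    (H : ∀ a : Fin n → ℕ, ∑ j, a j ≤ k - 2 → ∑ i, c i * ∏ j, P i j ^ a j = 0)
    (p : MvPolynomial (Fin n) ℂ) (hp : p.totalDegree ≤ k - 2) :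
    ∑ i, c i * MvPolynomial.eval (P i) p = 0 := by
  have he : ∀ i, MvPolynomial.eval (P i) p = ∑ d ∈ p.support, p.coeff d * ∏ j, P i j ^ d j :=
    fun i => MvPolynomial.eval_eq' _ _
  simp_rw [he, Finset.mul_sum]
  rw [Finset.sum_comm]
  refine Finset.sum_eq_zero fun d hd => ?_
  have hdeg : ∑ j, d j ≤ k - 2 := by
    have h1 := MvPolynomial.le_totalDegree hd
    have h2 : d.sum (fun _ e => e) = ∑ j, d j := Finsupp.sum_fintype _ _ (fun _ => rfl)
    omega
  have h0 := H (fun j => d j) hdeg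
  calc ∑ i, c i * (p.coeff d * ∏ j, P i j ^ d j)
      = p.coeff d * ∑ i, c i * ∏ j, P i j ^ d j := by
        rw [Finset.mul_sum]; exact Finset.sum_congr rfl fun i _ => by ring
    _ = 0 := by rw [h0, mul_zero]

private lemma auxPow {n k : ℕ} (P : Fin k → Fin n → ℂ) (c : Fin k → ℂ)
    (H : ∀ a : Fin n → ℕ, ∑ j, a j ≤ k - 2 → ∑ i, c i * ∏ j, P i j ^ a j = 0)
    (H2 : ∀ j, ∑ i, c i * P i j ^ (k - 1) = 0)
    (j : Fin n) (m : ℕ) (hm : m ≤ k - 1) : ∑ i, c i * P i j ^ m = 0 := by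
  rcases eq_or_lt_of_le hm with h | h
  · rw [h]; exact H2 j
  · have hm2 : m ≤ k - 2 := by omega
    have hs : ∑ j', (Pi.single j m : Fin n → ℕ) j' = m := by
      rw [Finset.sum_eq_single j] <;> simp +contextual [Pi.single_eq_of_ne]
    have hprod : ∀ i, ∏ j', P i j' ^ (Pi.single j m : Fin n → ℕ) j' = P i j ^ m := by
      intro i
      rw [Finset.prod_eq_single j] <;> simp +contextual [Pi.single_eq_of_ne]
    have := H (Pi.single j m) (by rw [hs]; exact hm2)
    simpa [hprod] using this

private lemma auxFiber {n k : ℕ} (P : Fin k → Fin n → ℂ) (c : Fin k → ℂ)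
    (Hpow : ∀ (j : Fin n) (m : ℕ), m ≤ k - 1 → ∑ i, c i * P i j ^ m = 0)
    (j : Fin n) (t : ℂ) (ht : ∃ i, P i j = t) :
    ∑ i ∈ univ.filter (fun i => P i j = t), c i = 0 := by
  set V : Finset ℂ := Finset.image (fun i => P i j) univ with hV
  have htV : t ∈ V := by obtain ⟨i, hi⟩ := ht; exact mem_image.2 ⟨i, mem_univ i, hi⟩
  set g : Polynomial ℂ := Lagrange.basis V id t with hg
  have hinj : Set.InjOn (id : ℂ → ℂ) V := Function.injective_id.injOn
  have hk : 1 ≤ k := by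
    obtain ⟨i, _⟩ := ht; exact Nat.succ_le_of_lt i.pos
  have hdeg : g.natDegree < k - 1 + 1 := by
    rw [hg, Lagrange.natDegree_basis hinj htV]
    have h1 : V.card ≤ k := Finset.card_image_le.trans (by simp)
    have h2 : 1 ≤ V.card := Finset.card_pos.2 ⟨t, htV⟩
    omega
  have key : ∑ i, c i * g.eval (P i j) = 0 := by
    have he : ∀ i, g.eval (P i j) = ∑ m ∈ Finset.range (k - 1 + 1), g.coeff m * P i j ^ m :=
      fun i => Polynomial.eval_eq_sum_range' hdeg _
    simp_rw [he, Finset.mul_sum]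
    rw [Finset.sum_comm]
    refine Finset.sum_eq_zero fun m hm => ?_
    have h0 := Hpow j m (by have := Finset.mem_range.1 hm; omega)
    calc ∑ i, c i * (g.coeff m * P i j ^ m)
        = g.coeff m * ∑ i, c i * P i j ^ m := by
          rw [Finset.mul_sum]; exact Finset.sum_congr rfl fun i _ => by ring
      _ = 0 := by rw [h0, mul_zero]
  have heval : ∀ i, g.eval (P i j) = if P i j = t then 1 else 0 := by
    intro i
    by_cases h : P i j = t
    · rw [h, if_pos rfl]
      exact Lagrange.eval_basis_self hinj htV
    · rw [if_neg h]
      exact Lagrange.eval_basis_of_ne (s := V) (v := (id : ℂ → ℂ)) (i := t) (j := P i j)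
        (fun ht' => h ht'.symm) (mem_image.2 ⟨i, mem_univ i, rfl⟩)
  calc ∑ i ∈ univ.filter (fun i => P i j = t), c i
      = ∑ i, c i * g.eval (P i j) := by
        rw [Finset.sum_filter]
        exact Finset.sum_congr rfl fun i _ => by rw [heval i]; split <;> ring
    _ = 0 := key

/-- The map `ℂⁿ → ℂ^{C(n+k−2,k−2)+n}` given by all monomials of degree at most `k − 2`
together with the `n` pure powers `xᵢ^{k−1}` is `k`-regular. -/
theorem stmt12 (n k : ℕ) :
    ∀ P : Fin k → (Fin n → ℂ), Function.Injective P →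
      LinearIndependent ℂ (fun i : Fin k =>
        (Sum.elim (fun a : {a : Fin n → ℕ // ∑ j, a j ≤ k - 2} => ∏ j, P i j ^ a.1 j)
          (fun j : Fin n => P i j ^ (k - 1)) :
          {a : Fin n → ℕ // ∑ j, a j ≤ k - 2} ⊕ Fin n → ℂ)) := by
  intro P hP
  rw [Fintype.linearIndependent_iff]
  intro c hc
  by_contra hex
  push_neg at hex
  obtain ⟨i0, hi0⟩ := hex
  have H : ∀ a : Fin n → ℕ, ∑ j, a j ≤ k - 2 → ∑ i, c i * ∏ j, P i j ^ a j = 0 := by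
    intro a ha
    have := congrFun hc (Sum.inl ⟨a, ha⟩)
    simpa [Finset.sum_apply] using this
  have H2 : ∀ j, ∑ i, c i * P i j ^ (k - 1) = 0 := by
    intro j
    have := congrFun hc (Sum.inr j)
    simpa [Finset.sum_apply] using this
  -- trivial case: c vanishes away from i0
  by_cases hT : ∀ i, i ≠ i0 → c i = 0
  · have h0 := H (fun _ => 0) (by simp)
    simp only [pow_zero, Finset.prod_const_one, mul_one] at h0
    rw [Finset.sum_eq_single i0 (fun i _ hi => hT i hi) (by simp)] at h0
    exact hi0 h0
  push_neg at hT
  obtain ⟨i1, hi1ne, hci1⟩ := hT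
  have hsep : ∀ i : Fin k, i ≠ i0 → ∃ j, P i j ≠ P i0 j := by
    intro i hi
    by_contra h
    push_neg at h
    exact hi (hP (funext h))
  have hn : Nonempty (Fin n) := ⟨(hsep i1 hi1ne).choose⟩
  have : Inhabited (Fin n) := Classical.inhabited_of_nonempty hn
  choose! jf hjf using hsep
  set S : Finset (Fin k) := univ.filter (fun i => c i ≠ 0) with hS
  have hi0S : i0 ∈ S := mem_filter.2 ⟨mem_univ _, hi0⟩
  set g : Fin k → Fin n × ℂ := fun i => (jf i, P i (jf i)) with hgdef
  -- construct the separating set of linear factors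
  obtain ⟨L, hLcard, hL0, hLkill⟩ :
      ∃ L : Finset (Fin n × ℂ), L.card ≤ k - 2 ∧ (∀ q ∈ L, P i0 q.1 ≠ q.2) ∧
        (∀ i, c i ≠ 0 → i ≠ i0 → ∃ q ∈ L, P i q.1 = q.2) := by
    by_cases hcard : S.card ≤ k - 1
    · refine ⟨(S.erase i0).image g, ?_, ?_, ?_⟩
      · have h1 := Finset.card_image_le (s := S.erase i0) (f := g)
        rw [Finset.card_erase_of_mem hi0S] at h1
        have h2 : 1 ≤ S.card := Finset.card_pos.2 ⟨i0, hi0S⟩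
        omega
      · intro q hq
        obtain ⟨i, hi, rfl⟩ := Finset.mem_image.1 hq
        exact (hjf i (Finset.mem_erase.1 hi).1).symm
      · intro i hci hi
        exact ⟨g i, Finset.mem_image_of_mem g
          (Finset.mem_erase.2 ⟨hi, mem_filter.2 ⟨mem_univ _, hci⟩⟩), rfl⟩
    · have hSk : S.card = k := by
        have := Finset.card_le_univ S
        simp only [Finset.card_univ, Fintype.card_fin] at this
        omega
      have hSuniv : S = univ := Finset.eq_univ_of_card S (by simpa using hSk)
      have hall : ∀ i, c i ≠ 0 := by
        intro i
        have : i ∈ S := hSuniv ▸ mem_univ i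
        exact (mem_filter.1 this).2
      set j1 : Fin n := jf i1 with hj1
      set t1 : ℂ := P i1 (jf i1) with ht1
      set F : Finset (Fin k) := univ.filter (fun i => P i j1 = t1) with hF
      have hi1F : i1 ∈ F := mem_filter.2 ⟨mem_univ _, rfl⟩
      have hi0F : i0 ∉ F := by
        intro h
        exact (hjf i1 hi1ne) ((mem_filter.1 h).2).symm
      have hFsum : ∑ i ∈ F, c i = 0 :=
        auxFiber P c (auxPow P c H H2) j1 t1 ⟨i1, rfl⟩
      have hF2 : 2 ≤ F.card := by
        by_contra h
        push_neg at h
        have : F = {i1} := by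
          apply Finset.eq_singleton_iff_unique_mem.2
          refine ⟨hi1F, fun x hx => ?_⟩
          by_contra hxne
          have := Finset.one_lt_card.2 ⟨x, hx, i1, hi1F, hxne⟩
          omega
        rw [this, Finset.sum_singleton] at hFsum
        exact hci1 hFsum
      refine ⟨insert (j1, t1) (((univ \ F).erase i0).image g), ?_, ?_, ?_⟩
      · have h2 := Finset.card_image_le (s := (univ \ F).erase i0) (f := g)
        have h5 : F.card ≤ k := by simpa using Finset.card_le_univ F
        have h3 : ((univ \ F).erase i0).card = k - F.card - 1 := by
          rw [Finset.card_erase_of_mem (Finset.mem_sdiff.2 ⟨mem_univ _, hi0F⟩),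
            Finset.card_sdiff_of_subset (Finset.subset_univ F)]
          simp
        refine (Finset.card_insert_le _ _).trans ?_
        rw [h3] at h2
        have h6 : F.card + 1 ≤ k := by
          have h7 : (insert i0 F).card ≤ k := by simpa using Finset.card_le_univ (insert i0 F)
          rwa [Finset.card_insert_of_notMem hi0F] at h7
        omega
      · intro q hq
        rcases Finset.mem_insert.1 hq with h | h
        · rw [h]
          exact fun he => (hjf i1 hi1ne) he.symm
        · obtain ⟨i, hi, rfl⟩ := Finset.mem_image.1 h
          exact (hjf i (Finset.mem_erase.1 hi).1).symm
      · intro i hci hi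
        by_cases hiF : i ∈ F
        · exact ⟨(j1, t1), Finset.mem_insert_self _ _, (mem_filter.1 hiF).2⟩
        · refine ⟨g i, Finset.mem_insert.2 (Or.inr (Finset.mem_image_of_mem g
            (Finset.mem_erase.2 ⟨hi, Finset.mem_sdiff.2 ⟨mem_univ _, hiF⟩⟩))), rfl⟩
  -- the separating polynomial
  set p : MvPolynomial (Fin n) ℂ := ∏ q ∈ L, (X q.1 - C q.2) with hpdef
  have hdeg : p.totalDegree ≤ k - 2 := by
    have hone : ∀ q ∈ L, (X (R := ℂ) q.1 - C q.2).totalDegree ≤ 1 := fun q _ =>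
      (MvPolynomial.totalDegree_sub_C_le _ _).trans (le_of_eq (totalDegree_X _))
    refine le_trans (MvPolynomial.totalDegree_finset_prod L _)
      (le_trans (Finset.sum_le_card_nsmul L _ 1 hone) ?_)
    simpa using hLcard
  have hev := auxMv P c H p hdeg
  have hevi : ∀ i, MvPolynomial.eval (P i) p = ∏ q ∈ L, (P i q.1 - q.2) := by
    intro i
    rw [hpdef, map_prod]
    exact Finset.prod_congr rfl fun q _ => by simp
  rw [Finset.sum_eq_single i0] at hev
  · rw [hevi] at hev
    have hne : ∏ q ∈ L, (P i0 q.1 - q.2) ≠ 0 :=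
      Finset.prod_ne_zero_iff.2 fun q hq => sub_ne_zero.2 (hL0 q hq)
    exact hi0 ((mul_eq_zero.1 hev).resolve_right hne)
  · intro i _ hi
    by_cases hci : c i = 0
    · rw [hci, zero_mul]
    · obtain ⟨q, hq, hq2⟩ := hLkill i hci hi
      rw [hevi i, Finset.prod_eq_zero hq (sub_eq_zero.2 hq2), mul_zero]
  · simp
end

section
/- The map ℂ² → ℂ⁸ given by (s,t) ↦ (1, s, t, st, s², t², s³, t³) is 4-regular. -/
/-- The map `(s,t) ↦ (1, s, t, st, s², t², s³, t³)` from `ℂ²` to `ℂ⁸`. -/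
noncomputable def G4 : ℂ × ℂ → Fin 8 → ℂ := fun p =>
  ![1, p.1, p.2, p.1 * p.2, p.1 ^ 2, p.2 ^ 2, p.1 ^ 3, p.2 ^ 3]


/-- Evaluation of the general polynomial in the span of the 8 monomials. -/
def Fpoly (a0 a1 a2 a3 a4 a5 a6 a7 x y : ℂ) : ℂ :=
  a0 + a1 * x + a2 * y + a3 * (x * y) + a4 * x ^ 2 + a5 * y ^ 2 + a6 * x ^ 3 + a7 * y ^ 3

lemma exists_prod (α₁ β₁ γ₁ α₂ β₂ γ₂ : ℂ) :
    ∃ a0 a1 a2 a3 a4 a5 a6 a7 : ℂ, ∀ x y : ℂ,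
      Fpoly a0 a1 a2 a3 a4 a5 a6 a7 x y = (α₁ + β₁ * x + γ₁ * y) * (α₂ + β₂ * x + γ₂ * y) :=
  ⟨α₁*α₂, α₁*β₂+α₂*β₁, α₁*γ₂+α₂*γ₁, β₁*γ₂+β₂*γ₁, β₁*β₂, γ₁*γ₂, 0, 0,
   fun x y => by simp only [Fpoly]; ring⟩

lemma exists_cubic_x (r1 r2 r3 : ℂ) :
    ∃ a0 a1 a2 a3 a4 a5 a6 a7 : ℂ, ∀ x y : ℂ,
      Fpoly a0 a1 a2 a3 a4 a5 a6 a7 x y = (x - r1) * (x - r2) * (x - r3) :=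
  ⟨-(r1*r2*r3), r1*r2+r1*r3+r2*r3, 0, 0, -(r1+r2+r3), 0, 1, 0,
   fun x y => by simp only [Fpoly]; ring⟩

lemma exists_cubic_y (r1 r2 r3 : ℂ) :
    ∃ a0 a1 a2 a3 a4 a5 a6 a7 : ℂ, ∀ x y : ℂ,
      Fpoly a0 a1 a2 a3 a4 a5 a6 a7 x y = (y - r1) * (y - r2) * (y - r3) :=
  ⟨-(r1*r2*r3), 0, r1*r2+r1*r3+r2*r3, 0, 0, -(r1+r2+r3), 0, 1,
   fun x y => by simp only [Fpoly]; ring⟩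

/-- Separating polynomial: vanishes at the three `q`s, nonzero at `p`. -/
lemma sep (sp tp s1 t1 s2 t2 s3 t3 : ℂ)
    (h1 : ¬(sp = s1 ∧ tp = t1)) (h2 : ¬(sp = s2 ∧ tp = t2)) (h3 : ¬(sp = s3 ∧ tp = t3)) :
    ∃ a0 a1 a2 a3 a4 a5 a6 a7 : ℂ,
      Fpoly a0 a1 a2 a3 a4 a5 a6 a7 s1 t1 = 0 ∧
      Fpoly a0 a1 a2 a3 a4 a5 a6 a7 s2 t2 = 0 ∧
      Fpoly a0 a1 a2 a3 a4 a5 a6 a7 s3 t3 = 0 ∧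
      Fpoly a0 a1 a2 a3 a4 a5 a6 a7 sp tp ≠ 0 := by
  by_cases hc12 : (sp - s1) * (t2 - t1) - (tp - t1) * (s2 - s1) = 0
  · by_cases hc13 : (sp - s1) * (t3 - t1) - (tp - t1) * (s3 - s1) = 0
    · -- collinear case
      -- cross(p - q2, p - q1) = L12(p) = 0 and similarly for q3
      have r2 : (sp - s2) * (tp - t1) = (tp - t2) * (sp - s1) := by linear_combination hc12
      have r3 : (sp - s3) * (tp - t1) = (tp - t3) * (sp - s1) := by linear_combination hc13
      by_cases hx : sp = s1
      · -- all points share the x-coordinate direction degenerate: use cubic in y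
        have ht1 : tp ≠ t1 := fun h => h1 ⟨hx, h⟩
        have hs2 : sp = s2 := by
          have h0 : (sp - s2) * (tp - t1) = 0 := by rw [hx] at r2 ⊢; linear_combination r2
          rcases mul_eq_zero.1 h0 with h | h
          · exact sub_eq_zero.1 h
          · exact absurd (sub_eq_zero.1 h) ht1
        have ht2 : tp ≠ t2 := fun h => h2 ⟨hs2, h⟩
        have hs3 : sp = s3 := by
          have h0 : (sp - s3) * (tp - t1) = 0 := by rw [hx] at r3 ⊢; linear_combination r3
          rcases mul_eq_zero.1 h0 with h | h
          · exact sub_eq_zero.1 h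
          · exact absurd (sub_eq_zero.1 h) ht1
        have ht3 : tp ≠ t3 := fun h => h3 ⟨hs3, h⟩
        obtain ⟨a0,a1,a2,a3,a4,a5,a6,a7,hF⟩ := exists_cubic_y t1 t2 t3
        refine ⟨a0,a1,a2,a3,a4,a5,a6,a7, ?_, ?_, ?_, ?_⟩ <;> rw [hF]
        · ring
        · ring
        · ring
        · exact mul_ne_zero (mul_ne_zero (sub_ne_zero.2 ht1) (sub_ne_zero.2 ht2))
            (sub_ne_zero.2 ht3)
      · -- use cubic in x
        have hs2 : sp ≠ s2 := by
          intro h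
          have h0 : (tp - t2) * (sp - s1) = 0 := by rw [← r2, h]; ring
          rcases mul_eq_zero.1 h0 with h' | h'
          · exact h2 ⟨h, sub_eq_zero.1 h'⟩
          · exact hx (sub_eq_zero.1 h')
        have hs3 : sp ≠ s3 := by
          intro h
          have h0 : (tp - t3) * (sp - s1) = 0 := by rw [← r3, h]; ring
          rcases mul_eq_zero.1 h0 with h' | h'
          · exact h3 ⟨h, sub_eq_zero.1 h'⟩
          · exact hx (sub_eq_zero.1 h')
        have hs1 : sp ≠ s1 := hx
        obtain ⟨a0,a1,a2,a3,a4,a5,a6,a7,hF⟩ := exists_cubic_x s1 s2 s3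
        refine ⟨a0,a1,a2,a3,a4,a5,a6,a7, ?_, ?_, ?_, ?_⟩ <;> rw [hF]
        · ring
        · ring
        · ring
        · exact mul_ne_zero (mul_ne_zero (sub_ne_zero.2 hs1) (sub_ne_zero.2 hs2))
            (sub_ne_zero.2 hs3)
    · -- line through q1 q3 misses p ; kill q2 with a line through q2 missing p
      by_cases hx : sp = s2
      · have ht : tp ≠ t2 := fun h => h2 ⟨hx, h⟩
        obtain ⟨a0,a1,a2,a3,a4,a5,a6,a7,hF⟩ :=
          exists_prod (t1*s3 - s1*t3) (t3 - t1) (s1 - s3) (-t2) 0 1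
        refine ⟨a0,a1,a2,a3,a4,a5,a6,a7, ?_, ?_, ?_, ?_⟩ <;> rw [hF]
        · exact mul_eq_zero_of_left (by ring) _
        · exact mul_eq_zero_of_right _ (by ring)
        · exact mul_eq_zero_of_left (by ring) _
        · exact mul_ne_zero (fun h => hc13 (by linear_combination h))
            (fun h => ht (by linear_combination h))
      · obtain ⟨a0,a1,a2,a3,a4,a5,a6,a7,hF⟩ :=
          exists_prod (t1*s3 - s1*t3) (t3 - t1) (s1 - s3) (-s2) 1 0
        refine ⟨a0,a1,a2,a3,a4,a5,a6,a7, ?_, ?_, ?_, ?_⟩ <;> rw [hF]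
        · exact mul_eq_zero_of_left (by ring) _
        · exact mul_eq_zero_of_right _ (by ring)
        · exact mul_eq_zero_of_left (by ring) _
        · exact mul_ne_zero (fun h => hc13 (by linear_combination h))
            (fun h => hx (by linear_combination h))
  · -- line through q1 q2 misses p ; kill q3 with a line through q3 missing p
    by_cases hx : sp = s3
    · have ht : tp ≠ t3 := fun h => h3 ⟨hx, h⟩
      obtain ⟨a0,a1,a2,a3,a4,a5,a6,a7,hF⟩ :=
        exists_prod (t1*s2 - s1*t2) (t2 - t1) (s1 - s2) (-t3) 0 1
      refine ⟨a0,a1,a2,a3,a4,a5,a6,a7, ?_, ?_, ?_, ?_⟩ <;> rw [hF]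
      · exact mul_eq_zero_of_left (by ring) _
      · exact mul_eq_zero_of_left (by ring) _
      · exact mul_eq_zero_of_right _ (by ring)
      · exact mul_ne_zero (fun h => hc12 (by linear_combination h))
          (fun h => ht (by linear_combination h))
    · obtain ⟨a0,a1,a2,a3,a4,a5,a6,a7,hF⟩ :=
        exists_prod (t1*s2 - s1*t2) (t2 - t1) (s1 - s2) (-s3) 1 0
      refine ⟨a0,a1,a2,a3,a4,a5,a6,a7, ?_, ?_, ?_, ?_⟩ <;> rw [hF]
      · exact mul_eq_zero_of_left (by ring) _
      · exact mul_eq_zero_of_left (by ring) _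
      · exact mul_eq_zero_of_right _ (by ring)
      · exact mul_ne_zero (fun h => hc12 (by linear_combination h))
          (fun h => hx (by linear_combination h))

lemma alg0 (s0 t0 s1 t1 s2 t2 s3 t3 g0 g1 g2 g3 : ℂ)
    (e0 : g0 + g1 + g2 + g3 = 0)
    (e1 : g0 * s0 + g1 * s1 + g2 * s2 + g3 * s3 = 0)
    (e2 : g0 * t0 + g1 * t1 + g2 * t2 + g3 * t3 = 0)
    (e3 : g0 * (s0 * t0) + g1 * (s1 * t1) + g2 * (s2 * t2) + g3 * (s3 * t3) = 0)
    (e4 : g0 * s0 ^ 2 + g1 * s1 ^ 2 + g2 * s2 ^ 2 + g3 * s3 ^ 2 = 0)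
    (e5 : g0 * t0 ^ 2 + g1 * t1 ^ 2 + g2 * t2 ^ 2 + g3 * t3 ^ 2 = 0)
    (e6 : g0 * s0 ^ 3 + g1 * s1 ^ 3 + g2 * s2 ^ 3 + g3 * s3 ^ 3 = 0)
    (e7 : g0 * t0 ^ 3 + g1 * t1 ^ 3 + g2 * t2 ^ 3 + g3 * t3 ^ 3 = 0)
    (h1 : ¬(s0 = s1 ∧ t0 = t1)) (h2 : ¬(s0 = s2 ∧ t0 = t2)) (h3 : ¬(s0 = s3 ∧ t0 = t3)) :
    g0 = 0 := by
  obtain ⟨a0,a1,a2,a3,a4,a5,a6,a7,F1,F2,F3,Fp⟩ := sep s0 t0 s1 t1 s2 t2 s3 t3 h1 h2 h3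
  have key : g0 * Fpoly a0 a1 a2 a3 a4 a5 a6 a7 s0 t0
      + g1 * Fpoly a0 a1 a2 a3 a4 a5 a6 a7 s1 t1
      + g2 * Fpoly a0 a1 a2 a3 a4 a5 a6 a7 s2 t2
      + g3 * Fpoly a0 a1 a2 a3 a4 a5 a6 a7 s3 t3 = 0 := by
    simp only [Fpoly]
    linear_combination a0 * e0 + a1 * e1 + a2 * e2 + a3 * e3 + a4 * e4 + a5 * e5
      + a6 * e6 + a7 * e7
  rw [F1, F2, F3] at key
  have key2 : g0 * Fpoly a0 a1 a2 a3 a4 a5 a6 a7 s0 t0 = 0 := by linear_combination key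
  exact (mul_eq_zero.1 key2).resolve_right Fp

/-- The map `(s,t) ↦ (1, s, t, st, s², t², s³, t³)` is 4-regular. -/
theorem stmt13 :
    ∀ P : Fin 4 → ℂ × ℂ, Function.Injective P →
      LinearIndependent ℂ (fun i : Fin 4 => G4 (P i)) := by
  intro P hP
  rw [Fintype.linearIndependent_iff]
  intro g hg i
  have hne : ∀ i j : Fin 4, i ≠ j → ¬((P i).1 = (P j).1 ∧ (P i).2 = (P j).2) := by
    intro i j hij h
    exact hij (hP (Prod.ext h.1 h.2))
  have h : ∀ k : Fin 8, g 0 * G4 (P 0) k + g 1 * G4 (P 1) k + g 2 * G4 (P 2) k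
      + g 3 * G4 (P 3) k = 0 := fun k => by
    have := congrFun hg k
    simpa [Fin.sum_univ_four] using this
  have e0 : g 0 * 1 + g 1 * 1 + g 2 * 1 + g 3 * 1 = 0 := h 0
  have e1 : g 0 * (P 0).1 + g 1 * (P 1).1 + g 2 * (P 2).1 + g 3 * (P 3).1 = 0 := h 1
  have e2 : g 0 * (P 0).2 + g 1 * (P 1).2 + g 2 * (P 2).2 + g 3 * (P 3).2 = 0 := h 2
  have e3 : g 0 * ((P 0).1 * (P 0).2) + g 1 * ((P 1).1 * (P 1).2)
      + g 2 * ((P 2).1 * (P 2).2) + g 3 * ((P 3).1 * (P 3).2) = 0 := h 3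
  have e4 : g 0 * (P 0).1 ^ 2 + g 1 * (P 1).1 ^ 2 + g 2 * (P 2).1 ^ 2 + g 3 * (P 3).1 ^ 2 = 0 := h 4
  have e5 : g 0 * (P 0).2 ^ 2 + g 1 * (P 1).2 ^ 2 + g 2 * (P 2).2 ^ 2 + g 3 * (P 3).2 ^ 2 = 0 := h 5
  have e6 : g 0 * (P 0).1 ^ 3 + g 1 * (P 1).1 ^ 3 + g 2 * (P 2).1 ^ 3 + g 3 * (P 3).1 ^ 3 = 0 := h 6
  have e7 : g 0 * (P 0).2 ^ 3 + g 1 * (P 1).2 ^ 3 + g 2 * (P 2).2 ^ 3 + g 3 * (P 3).2 ^ 3 = 0 := h 7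
  fin_cases i
  · exact alg0 (P 0).1 (P 0).2 (P 1).1 (P 1).2 (P 2).1 (P 2).2 (P 3).1 (P 3).2
      (g 0) (g 1) (g 2) (g 3)
      (by linear_combination e0) (by linear_combination e1) (by linear_combination e2)
      (by linear_combination e3) (by linear_combination e4) (by linear_combination e5)
      (by linear_combination e6) (by linear_combination e7)
      (hne 0 1 (by decide)) (hne 0 2 (by decide)) (hne 0 3 (by decide))
  · exact alg0 (P 1).1 (P 1).2 (P 0).1 (P 0).2 (P 2).1 (P 2).2 (P 3).1 (P 3).2
      (g 1) (g 0) (g 2) (g 3)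
      (by linear_combination e0) (by linear_combination e1) (by linear_combination e2)
      (by linear_combination e3) (by linear_combination e4) (by linear_combination e5)
      (by linear_combination e6) (by linear_combination e7)
      (hne 1 0 (by decide)) (hne 1 2 (by decide)) (hne 1 3 (by decide))
  · exact alg0 (P 2).1 (P 2).2 (P 0).1 (P 0).2 (P 1).1 (P 1).2 (P 3).1 (P 3).2
      (g 2) (g 0) (g 1) (g 3)
      (by linear_combination e0) (by linear_combination e1) (by linear_combination e2)
      (by linear_combination e3) (by linear_combination e4) (by linear_combination e5)
      (by linear_combination e6) (by linear_combination e7)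
      (hne 2 0 (by decide)) (hne 2 1 (by decide)) (hne 2 3 (by decide))
  · exact alg0 (P 3).1 (P 3).2 (P 0).1 (P 0).2 (P 1).1 (P 1).2 (P 2).1 (P 2).2
      (g 3) (g 0) (g 1) (g 2)
      (by linear_combination e0) (by linear_combination e1) (by linear_combination e2)
      (by linear_combination e3) (by linear_combination e4) (by linear_combination e5)
      (by linear_combination e6) (by linear_combination e7)
      (hne 3 0 (by decide)) (hne 3 1 (by decide)) (hne 3 2 (by decide))
end

section
/- Let ℂ[x]/(x^k) with k > 3, let m be a mixed monomial of degree k−1 in x₁,…,xₙ (i.e., not a pure power), and let α : ℂ[x₁,…,xₙ] → ℂ[x]/(x^k) be any ℂ-algebra homomorphism with α(xᵢ) ∈ (x) for all i. If α(m) = c·x^{k−1} with c ≠ 0, then for any variable xᵢ dividing m, writing α(xᵢ) = a₁x + a₂x² + ⋯, we have a₁ ≠ 0, and the element m − (c/a₁^{k−1})·xᵢ^{k−1} lies in the kernel of α. -/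
open MvPolynomial

/-- Key step for projections away from mixed top-degree monomials: let `k > 3`, let `m` be a
mixed monomial of degree `k − 1`, and let `α : ℂ[x₁,…,xₙ] → ℂ[x]/(x^k)` be an algebra map
sending each variable into `(x)`. If `α(m) = c·x^{k−1}` with `c ≠ 0`, then for every variable
`xᵢ` dividing `m`, writing `α(xᵢ) = a₁x + a₂x² + ⋯`, one has `a₁ ≠ 0` and
`m − (c/a₁^{k−1})·xᵢ^{k−1} ∈ ker α`. -/
theorem stmt19 (n k : ℕ) (hk : 3 < k) (a : Fin n → ℕ) (ha : ∑ i, a i = k - 1)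
    (hmixed : ∃ i j : Fin n, i ≠ j ∧ a i ≠ 0 ∧ a j ≠ 0)
    (α : MvPolynomial (Fin n) ℂ →ₐ[ℂ]
      (Polynomial ℂ ⧸ Ideal.span {(Polynomial.X : Polynomial ℂ) ^ k}))
    (hα : ∀ i : Fin n, α (X i) ∈
      Ideal.map (Ideal.Quotient.mk (Ideal.span {(Polynomial.X : Polynomial ℂ) ^ k}))
        (Ideal.span {(Polynomial.X : Polynomial ℂ)}))
    (c : ℂ) (hc : c ≠ 0)
    (hm : α (monomial (Finsupp.equivFunOnFinite.symm a) 1) =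
      c • Ideal.Quotient.mk (Ideal.span {(Polynomial.X : Polynomial ℂ) ^ k})
        (Polynomial.X ^ (k - 1))) :
    ∀ i : Fin n, a i ≠ 0 → ∀ g : Polynomial ℂ,
      α (X i) = Ideal.Quotient.mk (Ideal.span {(Polynomial.X : Polynomial ℂ) ^ k}) g →
        g.coeff 1 ≠ 0 ∧
          α (monomial (Finsupp.equivFunOnFinite.symm a) 1 -
              C (c / g.coeff 1 ^ (k - 1)) * X i ^ (k - 1)) = 0 := by
  revert α
  set J : Ideal (Polynomial ℂ) := Ideal.span {(Polynomial.X : Polynomial ℂ) ^ k} with hJ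
  set mk := Ideal.Quotient.mk J with hmk
  intro α hα hm
  -- choose representatives in (X)
  have hrep : ∀ j : Fin n, ∃ p ∈ Ideal.span {(Polynomial.X : Polynomial ℂ)}, mk p = α (X j) :=
    fun j => (Ideal.mem_map_iff_of_surjective mk Ideal.Quotient.mk_surjective).mp (hα j)
  choose f hfX hfmk using hrep
  have hf0 : ∀ j, (f j).coeff 0 = 0 := fun j =>
    Polynomial.X_dvd_iff.mp (Ideal.mem_span_singleton.mp (hfX j))
  set h : Fin n → Polynomial ℂ := fun j => (f j).divX with hh
  have hfh : ∀ j, f j = Polynomial.X * h j := by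
    intro j
    have := Polynomial.X_mul_divX_add (f j)
    rw [hf0 j, map_zero, add_zero] at this
    exact this.symm
  have hhf : ∀ j, (h j).coeff 0 = (f j).coeff 1 := fun j => Polynomial.coeff_divX ..
  -- α of the monomial
  set P : Polynomial ℂ := ∏ j, (f j) ^ (a j) with hP
  have hmon : (monomial (Finsupp.equivFunOnFinite.symm a) 1 : MvPolynomial (Fin n) ℂ)
      = ∏ j, X j ^ (a j) := by
    rw [monomial_eq, map_one, one_mul,
      Finsupp.prod_fintype _ _ (fun i => pow_zero _)]
    rfl
  have hαm : α (monomial (Finsupp.equivFunOnFinite.symm a) 1) = mk P := by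
    rw [hmon, map_prod, hP, map_prod]
    refine Finset.prod_congr rfl fun j _ => ?_
    rw [map_pow, map_pow, hfmk]
  -- P = X^(k-1) * H
  set H : Polynomial ℂ := ∏ j, (h j) ^ (a j) with hH
  have hPH : P = Polynomial.X ^ (k - 1) * H := by
    rw [hP, hH, ← ha]
    calc ∏ j, (f j) ^ (a j) = ∏ j, (Polynomial.X ^ (a j) * (h j) ^ (a j)) := by
          refine Finset.prod_congr rfl fun j _ => ?_
          rw [hfh j, mul_pow]
      _ = (∏ j, Polynomial.X ^ (a j)) * ∏ j, (h j) ^ (a j) := Finset.prod_mul_distrib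
      _ = Polynomial.X ^ (∑ j, a j) * ∏ j, (h j) ^ (a j) := by
          rw [Finset.prod_pow_eq_pow_sum]
  -- scalar action through mk
  have hsmul : ∀ (t : ℂ) (q : Polynomial ℂ), t • mk q = mk (Polynomial.C t * q) := by
    intro t q
    have : mk (Polynomial.C t) = algebraMap ℂ (Polynomial ℂ ⧸ J) t := rfl
    rw [map_mul, this, ← Algebra.smul_def]
  -- c is the (k-1)-coefficient of P
  have hPc : mk (P - Polynomial.C c * Polynomial.X ^ (k - 1)) = 0 := by
    rw [map_sub, ← hαm, hm, hsmul, sub_self]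
  obtain ⟨q, hq⟩ := Ideal.mem_span_singleton.mp (Ideal.Quotient.eq_zero_iff_mem.mp hPc)
  have hcoeff : P.coeff (k - 1) = c := by
    have h1 : P.coeff (k - 1) - (Polynomial.C c * Polynomial.X ^ (k - 1)).coeff (k - 1)
        = (Polynomial.X ^ k * q).coeff (k - 1) := by
      rw [← Polynomial.coeff_sub, hq]
    rw [Polynomial.coeff_C_mul, Polynomial.coeff_X_pow, if_pos rfl, mul_one,
      mul_comm (Polynomial.X ^ k) q, Polynomial.coeff_mul_X_pow', if_neg (by omega)] at h1
    exact sub_eq_zero.mp h1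
  -- product formula for c
  have hcprod : c = ∏ j, ((h j).coeff 0) ^ (a j) := by
    rw [← hcoeff, hPH, mul_comm (Polynomial.X ^ (k-1)) H, Polynomial.coeff_mul_X_pow', if_pos le_rfl, Nat.sub_self]
    have : H.coeff 0 = Polynomial.constantCoeff H := rfl
    rw [this, hH, map_prod]
    exact Finset.prod_congr rfl fun j _ => by rw [map_pow]; rfl
  -- now the main part
  intro i hi g hg
  have hbne : (h i).coeff 0 ≠ 0 := by
    intro h0
    apply hc
    rw [hcprod]
    exact Finset.prod_eq_zero (Finset.mem_univ i) (by rw [h0, zero_pow hi])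
  -- g.coeff 1 = (h i).coeff 0
  have hgf : g.coeff 1 = (h i).coeff 0 := by
    have : mk (g - f i) = 0 := by rw [map_sub, ← hg, hfmk, sub_self]
    obtain ⟨r, hr⟩ := Ideal.mem_span_singleton.mp (Ideal.Quotient.eq_zero_iff_mem.mp this)
    have h2 : g.coeff 1 - (f i).coeff 1 = (Polynomial.X ^ k * r).coeff 1 := by
      rw [← Polynomial.coeff_sub, hr]
    rw [mul_comm (Polynomial.X ^ k) r, Polynomial.coeff_mul_X_pow', if_neg (by omega)] at h2
    rw [hhf i, ← sub_eq_zero]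
    exact h2
  refine ⟨by rw [hgf]; exact hbne, ?_⟩
  -- compute α (X i ^ (k-1))
  set b : ℂ := (h i).coeff 0 with hb
  set D : Polynomial ℂ := ((h i) ^ (k - 1)).divX with hD
  have hXpow : Polynomial.X ^ (k - 1) * Polynomial.X = (Polynomial.X : Polynomial ℂ) ^ k := by
    rw [← pow_succ]
    congr 1
    omega
  have hhk : (h i) ^ (k - 1) = Polynomial.C (b ^ (k - 1)) + Polynomial.X * D := by
    have h3 := Polynomial.X_mul_divX_add ((h i) ^ (k - 1))
    have hc0 : ((h i) ^ (k - 1)).coeff 0 = b ^ (k - 1) := by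
      have h4 : ((h i) ^ (k - 1)).coeff 0 = Polynomial.constantCoeff ((h i) ^ (k - 1)) := rfl
      rw [h4, map_pow]; rfl
    rw [hc0, ← hD] at h3
    rw [← h3]; ring
  have hkey : (f i) ^ (k - 1) - Polynomial.C (b ^ (k - 1)) * Polynomial.X ^ (k - 1)
      = Polynomial.X ^ k * D := by
    have e1 : (f i) ^ (k - 1) = Polynomial.X ^ (k - 1) * ((h i) ^ (k - 1)) := by
      rw [hfh i, mul_pow]
    rw [e1, hhk, ← hXpow]; ring
  have hXik : α (X i ^ (k - 1)) = (b ^ (k - 1)) • mk (Polynomial.X ^ (k - 1)) := by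
    rw [hsmul, map_pow, ← hfmk i, ← map_pow, ← sub_eq_zero, ← map_sub, hkey]
    exact Ideal.Quotient.eq_zero_iff_mem.mpr (Ideal.mem_span_singleton.mpr ⟨D, rfl⟩)
  -- conclude
  rw [map_sub, hm, map_mul, hXik, hgf]
  have hCt : α (C (c / b ^ (k - 1))) = algebraMap ℂ (Polynomial ℂ ⧸ J) (c / b ^ (k - 1)) := by
    rw [← MvPolynomial.algebraMap_eq]
    exact α.commutes _
  rw [hCt, ← Algebra.smul_def, smul_smul, div_mul_cancel₀ c (pow_ne_zero _ hbne), sub_self]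
end
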